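/- arXiv:1706.06441 — 4 statements merged into one kernel-verified Lean document; each statement's English description precedes it below -/
import Mathlib

section
/- Let T be a tournament with minimum out-degree at least 4. Then there is a balanced partition of V(T) into two sets V1 and V2 such that the minimum out-degrees of the induced subdigraph on V1, the induced subdigraph on V2, and the bipartite subdigraph consisting of all arcs between V1 and V2, are all at least 1. -/
open Finset

namespace Stmt10

open scoped Classical

variable {V : Type*} [Fintype V]

noncomputable def N (A : V → V → Prop) (v : V) : Finset V :=
  Finset.univ.filter (fun w => A v w)

noncomputable def dg (A : V → V → Prop) (v : V) : ℕ := (N A v).card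

lemma mem_N {A : V → V → Prop} {v w : V} : w ∈ N A v ↔ A v w := by
  simp [N]

lemma not_self_mem_N {A : V → V → Prop} (hirr : ∀ v : V, ¬ A v v) (v : V) :
    v ∉ N A v := by simp [mem_N, hirr v]

/-- double counting arcs inside S -/
lemma two_mul_sum_inter {A : V → V → Prop}
    (hirr : ∀ v : V, ¬ A v v)
    (htot : ∀ u v : V, u ≠ v → Xor' (A u v) (A v u)) (S : Finset V) :
    2 * ∑ v ∈ S, ((N A v) ∩ S).card = S.card * (S.card - 1) := by
  classical
  set E : Finset (V × V) := S.offDiag.filter (fun z => A z.1 z.2) with hE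
  have hcardE : E.card = ∑ v ∈ S, ((N A v) ∩ S).card := by
    have hEb : E = S.biUnion (fun v => ((N A v) ∩ S).image (fun w => (v, w))) := by
      ext ⟨a, b⟩
      simp only [hE, Finset.mem_filter, Finset.mem_offDiag, Finset.mem_biUnion,
        Finset.mem_image, Finset.mem_inter, mem_N, Prod.mk.injEq]
      constructor
      · rintro ⟨⟨ha, hb, hab⟩, harc⟩
        exact ⟨a, ha, b, ⟨harc, hb⟩, rfl, rfl⟩
      · rintro ⟨v, hv, w, ⟨harc, hw⟩, rfl, rfl⟩
        exact ⟨⟨hv, hw, fun h => hirr v (h ▸ harc)⟩, harc⟩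
    rw [hEb, Finset.card_biUnion]
    · apply Finset.sum_congr rfl
      intro v _
      rw [Finset.card_image_of_injective _ (fun x y h => by simpa using congrArg Prod.snd h)]
    · intro x _ y _ hxy
      simp only [Finset.disjoint_left, Finset.mem_image]
      rintro z ⟨w, _, rfl⟩ ⟨w', _, h⟩
      exact hxy (by simpa using (congrArg Prod.fst h).symm)
  have hsub1 : E ⊆ S.offDiag := Finset.filter_subset _ _
  have hsub2 : E.image Prod.swap ⊆ S.offDiag := by
    intro z hz
    simp only [Finset.mem_image] at hz
    obtain ⟨w, hw, rfl⟩ := hz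
    have := hsub1 hw
    simp only [Finset.mem_offDiag] at this ⊢
    exact ⟨this.2.1, this.1, this.2.2.symm⟩
  have hcover : S.offDiag = E ∪ E.image Prod.swap := by
    apply Finset.Subset.antisymm
    · intro z hz
      simp only [Finset.mem_offDiag] at hz
      by_cases h : A z.1 z.2
      · exact Finset.mem_union_left _ (by simp [hE, Finset.mem_filter, Finset.mem_offDiag, hz.1, hz.2.1, hz.2.2, h])
      · have hba : A z.2 z.1 := by
          rcases htot z.1 z.2 hz.2.2 with ⟨h1, _⟩ | ⟨h1, _⟩
          · exact absurd h1 h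
          · exact h1
        apply Finset.mem_union_right
        refine Finset.mem_image.2 ⟨(z.2, z.1), ?_, rfl⟩
        simp [hE, Finset.mem_filter, Finset.mem_offDiag, hz.1, hz.2.1, hz.2.2.symm, hba]
    · exact Finset.union_subset hsub1 hsub2
  have hdisj : Disjoint E (E.image Prod.swap) := by
    rw [Finset.disjoint_left]
    intro z hz1 hz2
    simp only [hE, Finset.mem_filter, Finset.mem_offDiag] at hz1
    obtain ⟨w, hw, rfl⟩ := Finset.mem_image.1 hz2
    simp only [hE, Finset.mem_filter, Finset.mem_offDiag] at hw
    rcases htot w.1 w.2 hw.1.2.2 with ⟨_, h2⟩ | ⟨_, h2⟩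
    · exact h2 hz1.2
    · exact h2 hw.2
  have himg : (E.image Prod.swap).card = E.card :=
    Finset.card_image_of_injective _ Prod.swap_injective
  have := Finset.card_union_of_disjoint hdisj
  rw [← hcover, himg] at this
  rw [Finset.offDiag_card, hcardE] at this
  have hs : S.card * (S.card - 1) = S.card * S.card - S.card := by
    rw [Nat.mul_sub, Nat.mul_one]
  omega

lemma card_low_le {A : V → V → Prop}
    (hirr : ∀ v : V, ¬ A v v)
    (htot : ∀ u v : V, u ≠ v → Xor' (A u v) (A v u)) (k : ℕ) :
    (Finset.univ.filter (fun v => dg A v ≤ k)).card ≤ 2 * k + 1 := by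
  classical
  set S := Finset.univ.filter (fun v => dg A v ≤ k) with hS
  have hsum := two_mul_sum_inter hirr htot S
  have hle : ∑ v ∈ S, ((N A v) ∩ S).card ≤ S.card * k := by
    calc ∑ v ∈ S, ((N A v) ∩ S).card ≤ ∑ _v ∈ S, k := by
          apply Finset.sum_le_sum
          intro v hv
          have : ((N A v) ∩ S).card ≤ (N A v).card :=
            Finset.card_le_card (Finset.inter_subset_left)
          have hvk : dg A v ≤ k := by
            have := hv
            rw [hS, Finset.mem_filter] at this
            exact this.2
          exact le_trans this hvk
      _ = S.card * k := by rw [Finset.sum_const, smul_eq_mul]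
  have : S.card * (S.card - 1) ≤ 2 * (S.card * k) := by omega
  rcases Nat.eq_zero_or_pos S.card with h0 | hpos
  · omega
  · have h1 : S.card - 1 ≤ 2 * k := by
      by_contra hc
      push_neg at hc
      have h2 : S.card * (2 * k) < S.card * (S.card - 1) :=
        Nat.mul_lt_mul_of_le_of_lt (le_refl _) hc hpos
      nlinarith [h2, hle, this]
    omega

/-- if there are 9 vertices of degree ≤ 4 (all of degree exactly 4),
their out-neighbourhoods stay inside the set -/
lemma closed_of_nine {A : V → V → Prop}
    (hirr : ∀ v : V, ¬ A v v)
    (htot : ∀ u v : V, u ≠ v → Xor' (A u v) (A v u))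
    (hδ : ∀ v : V, 4 ≤ dg A v)
    (h9 : (Finset.univ.filter (fun v => dg A v ≤ 4)).card = 9) :
    ∀ v ∈ Finset.univ.filter (fun v => dg A v ≤ 4),
      N A v ⊆ Finset.univ.filter (fun v => dg A v ≤ 4) := by
  classical
  set L := Finset.univ.filter (fun v => dg A v ≤ 4) with hL
  have hsum := two_mul_sum_inter hirr htot L
  rw [h9] at hsum
  -- each term ≤ 4 and there are 9 terms summing (doubled) to 72, so each = 4
  have hterm : ∀ v ∈ L, ((N A v) ∩ L).card ≤ 4 := by
    intro v hv
    have h1 : ((N A v) ∩ L).card ≤ dg A v :=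
      Finset.card_le_card (Finset.inter_subset_left)
    exact le_trans h1 (Finset.mem_filter.1 hv).2
  have hsum' : ∑ v ∈ L, ((N A v) ∩ L).card = 36 := by omega
  have hall : ∀ v ∈ L, ((N A v) ∩ L).card = 4 := by
    by_contra hc
    push_neg at hc
    obtain ⟨v, hv, hne⟩ := hc
    have hlt : ((N A v) ∩ L).card < 4 := lt_of_le_of_ne (hterm v hv) hne
    have hlt2 : ∑ v ∈ L, ((N A v) ∩ L).card < ∑ _v ∈ L, 4 :=
      Finset.sum_lt_sum hterm ⟨v, hv, hlt⟩
    rw [Finset.sum_const, smul_eq_mul, h9] at hlt2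
    omega
  intro v hv
  have h4 : dg A v = 4 :=
    le_antisymm (Finset.mem_filter.1 hv).2 (hδ v)
  have hcard := hall v hv
  have hsubset : (N A v) ∩ L ⊆ N A v := Finset.inter_subset_left
  have heq : (N A v) ∩ L = N A v :=
    Finset.eq_of_subset_of_card_le hsubset (by rw [hcard]; exact le_of_eq h4)
  rw [← heq]
  exact Finset.inter_subset_right

/-! ### pair systems -/

def Good (P : Finset (V × V)) : Prop :=
  (∀ p ∈ P, p.1 ≠ p.2) ∧
  ∀ p ∈ P, ∀ q ∈ P, p ≠ q → p.1 ≠ q.1 ∧ p.1 ≠ q.2 ∧ p.2 ≠ q.1 ∧ p.2 ≠ q.2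

noncomputable def supp (P : Finset (V × V)) : Finset V :=
  P.biUnion (fun p => {p.1, p.2})

lemma mem_supp {P : Finset (V × V)} {v : V} :
    v ∈ supp P ↔ ∃ p ∈ P, v = p.1 ∨ v = p.2 := by
  simp [supp, Finset.mem_biUnion, Finset.mem_insert, Finset.mem_singleton]

/-- covering greedy step -/
lemma greedy_step {A : V → V → Prop} (hδ : ∀ v : V, 4 ≤ dg A v)
    {Q : Finset (V × V)} (hQ : Good Q) (hQ2 : Q.card ≤ 2) {u : V}
    (hunc : ¬ ∃ p ∈ Q, p.1 ∈ N A u ∧ p.2 ∈ N A u) :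
    ∃ a b : V, a ≠ b ∧ a ∈ N A u ∧ b ∈ N A u ∧
      Good (insert (a, b) Q) := by
  classical
  push_neg at hunc
  have hcard : ((N A u) ∩ supp Q).card ≤ Q.card := by
    have hinj : ∀ w ∈ (N A u) ∩ supp Q, ∃ p ∈ Q, w = p.1 ∨ w = p.2 := by
      intro w hw
      exact mem_supp.1 (Finset.mem_inter.1 hw).2
    choose f hf1 hf2 using hinj
    apply Finset.card_le_card_of_injOn (fun w => if h : w ∈ (N A u) ∩ supp Q then f w h else (w, w))
    · intro w hw
      simp only [Finset.mem_coe] at hw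
      simp only [hw, dif_pos]
      exact hf1 w hw
    · intro w hw w' hw' heq
      simp only [Finset.mem_coe] at hw hw'
      simp only [hw, hw', dif_pos] at heq
      by_contra hne
      -- w ≠ w' both endpoints of the same pair p, both in N A u : contradiction
      set p := f w hw with hp
      have hw2 := hf2 w hw
      have hw'2 := heq ▸ hf2 w' hw'
      have hwN : w ∈ N A u := (Finset.mem_inter.1 hw).1
      have hw'N : w' ∈ N A u := (Finset.mem_inter.1 hw').1
      have hpQ : p ∈ Q := hf1 w hw
      have h12 := hunc p hpQ
      rcases hw2 with h1 | h1 <;> rcases hw'2 with h2 | h2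
      · exact hne (h1.trans h2.symm)
      · exact h12 (h1 ▸ hwN) (h2 ▸ hw'N)
      · exact h12 (h2 ▸ hw'N) (h1 ▸ hwN)
      · exact hne (h1.trans h2.symm)
  have hdiff : 2 ≤ ((N A u) \ supp Q).card := by
    have h1 : (N A u) \ supp Q = (N A u) \ ((N A u) ∩ supp Q) := by
      rw [Finset.sdiff_inter_self_left]
    rw [h1, Finset.card_sdiff_of_subset (Finset.inter_subset_left)]
    have := hδ u
    unfold dg at this
    omega
  obtain ⟨a, ha, b, hb, hab⟩ := Finset.one_lt_card.1 (by omega : 1 < ((N A u) \ supp Q).card)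
  have haN := (Finset.mem_sdiff.1 ha).1
  have haS := (Finset.mem_sdiff.1 ha).2
  have hbN := (Finset.mem_sdiff.1 hb).1
  have hbS := (Finset.mem_sdiff.1 hb).2
  refine ⟨a, b, hab, haN, hbN, ?_⟩
  have hnotin : ∀ q ∈ Q, a ≠ q.1 ∧ a ≠ q.2 ∧ b ≠ q.1 ∧ b ≠ q.2 := by
    intro q hq
    refine ⟨?_, ?_, ?_, ?_⟩ <;> intro h
    · exact haS (mem_supp.2 ⟨q, hq, Or.inl h⟩)
    · exact haS (mem_supp.2 ⟨q, hq, Or.inr h⟩)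
    · exact hbS (mem_supp.2 ⟨q, hq, Or.inl h⟩)
    · exact hbS (mem_supp.2 ⟨q, hq, Or.inr h⟩)
  constructor
  · intro p hp
    rcases Finset.mem_insert.1 hp with rfl | hp'
    · exact hab
    · exact hQ.1 p hp'
  · intro p hp q hq hpq
    rcases Finset.mem_insert.1 hp with rfl | hp'
    · rcases Finset.mem_insert.1 hq with h | hq'
      · exact absurd h.symm hpq
      · exact hnotin q hq'
    · rcases Finset.mem_insert.1 hq with h | hq'
      · subst h
        obtain ⟨h1, h2, h3, h4⟩ := hnotin p hp'
        exact ⟨fun hh => h1 hh.symm, fun hh => h3 hh.symm,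
               fun hh => h2 hh.symm, fun hh => h4 hh.symm⟩
      · exact hQ.2 p hp' q hq' hpq
/-- the covering loop -/
lemma cover_loop {A : V → V → Prop} (hδ : ∀ v : V, 4 ≤ dg A v) (target : ℕ) :
    ∀ (fuel : ℕ) (Q : Finset (V × V)) (C : Finset V), Good Q →
      C ⊆ Finset.univ.filter (fun v => dg A v ≤ 4) →
      (∀ v ∈ C, ∃ p ∈ Q, p.1 ∈ N A v ∧ p.2 ∈ N A v) →
      C.card + fuel = target →
      target ≤ (Finset.univ.filter (fun v => dg A v ≤ 4)).card →
      Q.card + fuel ≤ 3 →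
      ∃ (Q' : Finset (V × V)) (C' : Finset V), Good Q' ∧
        C' ⊆ Finset.univ.filter (fun v => dg A v ≤ 4) ∧
        (∀ v ∈ C', ∃ p ∈ Q', p.1 ∈ N A v ∧ p.2 ∈ N A v) ∧
        C'.card = target := by
  classical
  intro fuel
  induction fuel with
  | zero =>
    intro Q C hQ hCL hcov hcard _ _
    exact ⟨Q, C, hQ, hCL, hcov, by omega⟩
  | succ m ih =>
    intro Q C hQ hCL hcov hcard htar hq
    have hlt : C.card < (Finset.univ.filter (fun v => dg A v ≤ 4)).card := by omega
    obtain ⟨u, huL, huC⟩ : ∃ u ∈ Finset.univ.filter (fun v => dg A v ≤ 4), u ∉ C := by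
      by_contra hcon
      push_neg at hcon
      have hsub : (Finset.univ.filter (fun v => dg A v ≤ 4)) ⊆ C := hcon
      have := Finset.card_le_card hsub
      omega
    by_cases hcovu : ∃ p ∈ Q, p.1 ∈ N A u ∧ p.2 ∈ N A u
    · refine ih Q (insert u C) hQ ?_ ?_ ?_ htar (by omega)
      · exact Finset.insert_subset huL hCL
      · intro v hv
        rcases Finset.mem_insert.1 hv with rfl | hv'
        · exact hcovu
        · exact hcov v hv'
      · rw [Finset.card_insert_of_notMem huC]; omega
    · obtain ⟨a, b, hab, haN, hbN, hgood⟩ :=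
        greedy_step hδ hQ (by omega) hcovu
      refine ih (insert (a, b) Q) (insert u C) hgood ?_ ?_ ?_ htar ?_
      · exact Finset.insert_subset huL hCL
      · intro v hv
        rcases Finset.mem_insert.1 hv with rfl | hv'
        · exact ⟨(a, b), Finset.mem_insert_self _ _, haN, hbN⟩
        · obtain ⟨p, hp, h1, h2⟩ := hcov v hv'
          exact ⟨p, Finset.mem_insert_of_mem hp, h1, h2⟩
      · rw [Finset.card_insert_of_notMem huC]; omega
      · have := Finset.card_insert_le (a, b) Q
        omega

/-- pigeonhole pair in the 9-vertex regular case -/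
lemma exists_double_pair {A : V → V → Prop}
    (hirr : ∀ v : V, ¬ A v v)
    (htot : ∀ u v : V, u ≠ v → Xor' (A u v) (A v u))
    (hδ : ∀ v : V, 4 ≤ dg A v)
    (h9 : (Finset.univ.filter (fun v => dg A v ≤ 4)).card = 9) :
    ∃ a b v w : V, a ≠ b ∧ v ≠ w ∧
      v ∈ Finset.univ.filter (fun v => dg A v ≤ 4) ∧
      w ∈ Finset.univ.filter (fun v => dg A v ≤ 4) ∧
      a ∈ N A v ∧ b ∈ N A v ∧ a ∈ N A w ∧ b ∈ N A w := by
  classical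
  set L := Finset.univ.filter (fun v => dg A v ≤ 4) with hL
  have hclosed := closed_of_nine hirr htot hδ h9
  set T : Finset (V × (V × V)) :=
    (L ×ˢ ((Finset.univ : Finset V) ×ˢ (Finset.univ : Finset V))).filter
      (fun z => z.2.1 ∈ N A z.1 ∧ z.2.2 ∈ N A z.1 ∧ z.2.1 ≠ z.2.2) with hT
  have hmemT : ∀ z : V × (V × V), z ∈ T ↔
      z.1 ∈ L ∧ z.2.1 ∈ N A z.1 ∧ z.2.2 ∈ N A z.1 ∧ z.2.1 ≠ z.2.2 := by
    intro z
    simp only [hT, Finset.mem_filter, Finset.mem_product, Finset.mem_univ, and_true,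
      true_and]
  have hfib : T.card = ∑ v ∈ L, ((N A v).offDiag).card := by
    rw [Finset.card_eq_sum_card_fiberwise (f := fun z => z.1) (t := L)]
    · apply Finset.sum_congr rfl
      intro v hv
      apply Finset.card_nbij (fun z => z.2)
      · intro z hz
        simp only [Finset.mem_coe, Finset.mem_filter] at hz
        obtain ⟨hzT, hz1⟩ := hz
        rw [hmemT] at hzT
        simp only [Finset.mem_coe, Finset.mem_offDiag]
        rw [hz1] at hzT
        exact ⟨hzT.2.1, hzT.2.2.1, hzT.2.2.2⟩
      · intro z hz z' hz' heq
        simp only [Finset.mem_coe, Finset.mem_filter] at hz hz'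
        have h1 : z.1 = z'.1 := by rw [hz.2, hz'.2]
        exact Prod.ext h1 heq
      · intro q hq
        simp only [Finset.mem_coe, Finset.mem_offDiag] at hq
        refine ⟨(v, q), ?_, rfl⟩
        simp only [Finset.mem_coe, Finset.mem_filter]
        exact ⟨(hmemT (v, q)).2 ⟨hv, hq.1, hq.2.1, hq.2.2⟩, trivial⟩
    · intro z hz
      rw [Finset.mem_coe, hmemT] at hz
      exact hz.1
  have hcardT : T.card = 108 := by
    rw [hfib]
    have : ∀ v ∈ L, ((N A v).offDiag).card = 12 := by
      intro v hv
      rw [Finset.offDiag_card]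
      have h4 : dg A v = 4 := le_antisymm (Finset.mem_filter.1 hv).2 (hδ v)
      unfold dg at h4
      rw [h4]
    rw [Finset.sum_congr rfl this, Finset.sum_const, h9, smul_eq_mul]
  have hmaps : ∀ z ∈ T, z.2 ∈ L.offDiag := by
    intro z hz
    rw [hmemT] at hz
    rw [Finset.mem_offDiag]
    exact ⟨hclosed z.1 hz.1 hz.2.1, hclosed z.1 hz.1 hz.2.2.1, hz.2.2.2⟩
  have hcardL : L.offDiag.card = 72 := by rw [Finset.offDiag_card, h9]
  obtain ⟨y, hy, hfib2⟩ :=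
    Finset.exists_lt_card_fiber_of_mul_lt_card_of_maps_to hmaps
      (by rw [hcardL, hcardT]; norm_num : L.offDiag.card * 1 < T.card)
  obtain ⟨z1, hz1, z2, hz2, hne⟩ := Finset.one_lt_card.1 hfib2
  rw [Finset.mem_filter] at hz1 hz2
  have hz1T := (hmemT z1).1 hz1.1
  have hz2T := (hmemT z2).1 hz2.1
  have hvw : z1.1 ≠ z2.1 := by
    intro h
    exact hne (Prod.ext h (hz1.2.trans hz2.2.symm))
  refine ⟨y.1, y.2, z1.1, z2.1, ?_, hvw, hz1T.1, hz2T.1, ?_, ?_, ?_, ?_⟩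
  · have := hz1T.2.2.2
    rw [hz1.2] at this
    exact this
  · have := hz1T.2.1; rw [hz1.2] at this; exact this
  · have := hz1T.2.2.1; rw [hz1.2] at this; exact this
  · have := hz2T.2.1; rw [hz2.2] at this; exact this
  · have := hz2T.2.2.1; rw [hz2.2] at this; exact this

/-- main covering lemma -/
lemma exists_cover {A : V → V → Prop}
    (hirr : ∀ v : V, ¬ A v v)
    (htot : ∀ u v : V, u ≠ v → Xor' (A u v) (A v u))
    (hδ : ∀ v : V, 4 ≤ dg A v) :
    ∃ (Q : Finset (V × V)) (C : Finset V), Good Q ∧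
      C ⊆ Finset.univ.filter (fun v => dg A v ≤ 4) ∧
      (∀ v ∈ C, ∃ p ∈ Q, p.1 ∈ N A v ∧ p.2 ∈ N A v) ∧
      C.card ≤ 4 ∧
      (Finset.univ.filter (fun v => dg A v ≤ 4)).card ≤ 2 * C.card + 2 := by
  classical
  have hL9 : (Finset.univ.filter (fun v => dg A v ≤ 4)).card ≤ 9 := by
    have := card_low_le hirr htot (V := V) (A := A) 4
    omega
  rcases Nat.lt_or_ge (Finset.univ.filter (fun v => dg A v ≤ 4)).card 3 with h2 | h3
  · exact ⟨∅, ∅, ⟨by simp, by simp⟩, by simp, by simp, by simp, by omega⟩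
  rcases Nat.lt_or_ge (Finset.univ.filter (fun v => dg A v ≤ 4)).card 9 with h8 | h9
  · -- 3 ≤ card ≤ 8 : greedy three times
    obtain ⟨Q', C', hQ', hCL', hcov', hcard'⟩ :=
      cover_loop hδ 3 3 ∅ ∅ ⟨by simp, by simp⟩ (by simp) (by simp) (by simp) h3 (by simp)
    refine ⟨Q', C', hQ', hCL', hcov', by omega, by omega⟩
  · -- card = 9
    have h9' : (Finset.univ.filter (fun v => dg A v ≤ 4)).card = 9 := le_antisymm hL9 h9
    obtain ⟨a, b, v, w, hab, hvw, hvL, hwL, h1, h2, h3', h4'⟩ :=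
      exists_double_pair hirr htot hδ h9'
    obtain ⟨Q', C', hQ', hCL', hcov', hcard'⟩ :=
      cover_loop hδ 4 2 {(a, b)} {v, w}
        ⟨by simp [hab], by simp⟩
        (by intro x hx; rcases Finset.mem_insert.1 hx with rfl | hx'
            · exact hvL
            · rw [Finset.mem_singleton.1 hx']; exact hwL)
        (by intro x hx; rcases Finset.mem_insert.1 hx with rfl | hx'
            · exact ⟨(a, b), Finset.mem_singleton_self _, h1, h2⟩
            · rw [Finset.mem_singleton.1 hx']
              exact ⟨(a, b), Finset.mem_singleton_self _, h3', h4'⟩)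
        (by rw [Finset.card_insert_of_notMem (by simp [hvw]), Finset.card_singleton])
        (by omega) (by simp)
    refine ⟨Q', C', hQ', hCL', hcov', by omega, by omega⟩

/-- any finset can be partitioned into pairs plus at most one leftover -/
lemma pairing_ext : ∀ (n : ℕ) (S : Finset V), S.card = n →
    ∃ (P : Finset (V × V)) (R : Finset V),
      Good P ∧ (∀ p ∈ P, p.1 ∈ S ∧ p.2 ∈ S) ∧ R ⊆ S ∧ R.card ≤ 1 ∧
      (∀ v ∈ S, v ∈ R ∨ v ∈ supp P) ∧ (∀ v ∈ R, v ∉ supp P) ∧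
      2 * P.card + R.card = S.card := by
  classical
  intro n
  induction n using Nat.strong_induction_on with
  | _ n ih =>
    intro S hS
    rcases Nat.lt_or_ge n 2 with h1 | h2
    · refine ⟨∅, S, ⟨by simp, by simp⟩, by simp, Finset.Subset.refl _, by omega, ?_, ?_, ?_⟩
      · intro v hv; exact Or.inl hv
      · intro v _; simp [supp]
      · simp
    · obtain ⟨a, ha, b, hb, hab⟩ := Finset.one_lt_card.1 (by omega : 1 < S.card)
      set S' := S \ {a, b} with hS'
      have hcard' : S'.card = n - 2 := by
        rw [hS', Finset.card_sdiff_of_subset (by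
          intro x hx
          rcases Finset.mem_insert.1 hx with rfl | hx'
          · exact ha
          · rw [Finset.mem_singleton.1 hx']; exact hb)]
        rw [hS]
        congr 1
        rw [Finset.card_insert_of_notMem (by simp [hab]), Finset.card_singleton]
      obtain ⟨P', R, hGood', hPS', hRS', hR1, hcov', hRP', hsum'⟩ :=
        ih (n - 2) (by omega) S' hcard'
      have hanotin : a ∉ S' := by simp [hS']
      have hbnotin : b ∉ S' := by simp [hS']
      have habP : (a, b) ∉ P' := by
        intro h
        exact hanotin (hPS' (a, b) h).1
      refine ⟨insert (a, b) P', R, ?_, ?_, ?_, hR1, ?_, ?_, ?_⟩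
      · constructor
        · intro p hp
          rcases Finset.mem_insert.1 hp with rfl | hp'
          · exact hab
          · exact hGood'.1 p hp'
        · intro p hp q hq hpq
          have key : ∀ q ∈ P', (a, b).1 ≠ q.1 ∧ (a, b).1 ≠ q.2 ∧ (a, b).2 ≠ q.1 ∧ (a, b).2 ≠ q.2 := by
            intro q hq'
            obtain ⟨h1, h2⟩ := hPS' q hq'
            refine ⟨?_, ?_, ?_, ?_⟩ <;> intro h
            · exact hanotin (by rw [show a = q.1 from h]; exact h1)
            · exact hanotin (by rw [show a = q.2 from h]; exact h2)
            · exact hbnotin (by rw [show b = q.1 from h]; exact h1)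
            · exact hbnotin (by rw [show b = q.2 from h]; exact h2)
          rcases Finset.mem_insert.1 hp with rfl | hp'
          · rcases Finset.mem_insert.1 hq with h | hq'
            · exact absurd h.symm hpq
            · exact key q hq'
          · rcases Finset.mem_insert.1 hq with h | hq'
            · subst h
              obtain ⟨h1, h2, h3, h4⟩ := key p hp'
              exact ⟨fun hh => h1 hh.symm, fun hh => h3 hh.symm,
                     fun hh => h2 hh.symm, fun hh => h4 hh.symm⟩
            · exact hGood'.2 p hp' q hq' hpq
      · intro p hp
        rcases Finset.mem_insert.1 hp with rfl | hp'
        · exact ⟨ha, hb⟩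
        · obtain ⟨h1, h2⟩ := hPS' p hp'
          exact ⟨(Finset.mem_sdiff.1 (hS' ▸ h1)).1, (Finset.mem_sdiff.1 (hS' ▸ h2)).1⟩
      · exact hRS'.trans (Finset.sdiff_subset)
      · intro v hv
        by_cases hvab : v = a ∨ v = b
        · right
          rcases hvab with h | h
          · exact mem_supp.2 ⟨(a, b), Finset.mem_insert_self _ _, Or.inl h⟩
          · exact mem_supp.2 ⟨(a, b), Finset.mem_insert_self _ _, Or.inr h⟩
        · push_neg at hvab
          have hv' : v ∈ S' := by
            rw [hS', Finset.mem_sdiff]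
            exact ⟨hv, by simp [hvab.1, hvab.2]⟩
          rcases hcov' v hv' with h | h
          · exact Or.inl h
          · right
            obtain ⟨p, hp, hor⟩ := mem_supp.1 h
            exact mem_supp.2 ⟨p, Finset.mem_insert_of_mem hp, hor⟩
      · intro v hvR
        intro hvs
        obtain ⟨p, hp, hor⟩ := mem_supp.1 hvs
        rcases Finset.mem_insert.1 hp with rfl | hp'
        · have hvS' : v ∈ S' := hRS' hvR
          rcases hor with rfl | rfl
          · exact hanotin hvS'
          · exact hbnotin hvS'
        · exact hRP' v hvR (mem_supp.2 ⟨p, hp', hor⟩)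
      · rw [Finset.card_insert_of_notMem habP]
        omega

/-! ### the colouring given by an orientation of the pairs -/

noncomputable def colV1 (P : Finset (V × V)) (ε : {x // x ∈ P} → Bool) : Finset V :=
  P.attach.image (fun p => if ε p then (p : V × V).1 else (p : V × V).2)

lemma mem_colV1_iff {P : Finset (V × V)} (hP : Good P) (ε : {x // x ∈ P} → Bool)
    {p : V × V} (hp : p ∈ P) :
    (p.1 ∈ colV1 P ε ↔ ε ⟨p, hp⟩ = true) ∧ (p.2 ∈ colV1 P ε ↔ ε ⟨p, hp⟩ = false) := by
  classical
  constructor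
  · constructor
    · intro h
      obtain ⟨q, _, hq⟩ := Finset.mem_image.1 h
      by_cases hqp : (q : V × V) = p
      · by_cases hε : ε q
        · rw [show q = (⟨p, hp⟩ : {x // x ∈ P}) from Subtype.ext hqp] at hε
          exact hε
        · exfalso
          rw [if_neg hε] at hq
          subst hqp
          exact hP.1 _ hp hq.symm
      · exfalso
        have hd := hP.2 (q : V × V) q.2 p hp hqp
        by_cases hε : ε q
        · rw [if_pos hε] at hq; exact hd.1 hq
        · rw [if_neg hε] at hq; exact hd.2.2.1 hq
    · intro h
      apply Finset.mem_image.2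
      exact ⟨⟨p, hp⟩, Finset.mem_attach _ _, by rw [h]; simp⟩
  · constructor
    · intro h
      obtain ⟨q, _, hq⟩ := Finset.mem_image.1 h
      by_cases hqp : (q : V × V) = p
      · by_cases hε : ε q
        · exfalso
          rw [if_pos hε] at hq
          subst hqp
          exact hP.1 _ hp hq
        · rw [show q = (⟨p, hp⟩ : {x // x ∈ P}) from Subtype.ext hqp] at hε
          simpa using hε
      · exfalso
        have hd := hP.2 (q : V × V) q.2 p hp hqp
        by_cases hε : ε q
        · rw [if_pos hε] at hq; exact hd.2.1 hq
        · rw [if_neg hε] at hq; exact hd.2.2.2 hq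
    · intro h
      apply Finset.mem_image.2
      exact ⟨⟨p, hp⟩, Finset.mem_attach _ _, by rw [h]; simp⟩

lemma notin_colV1 {P : Finset (V × V)} (ε : {x // x ∈ P} → Bool)
    {v : V} (hv : v ∉ supp P) : v ∉ colV1 P ε := by
  intro h
  obtain ⟨q, _, hq⟩ := Finset.mem_image.1 h
  apply hv
  by_cases hε : ε q
  · rw [if_pos hε] at hq
    exact mem_supp.2 ⟨(q : V × V), q.2, Or.inl hq.symm⟩
  · rw [if_neg hε] at hq
    exact mem_supp.2 ⟨(q : V × V), q.2, Or.inr hq.symm⟩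

lemma card_colV1 {P : Finset (V × V)} (hP : Good P) (ε : {x // x ∈ P} → Bool) :
    (colV1 P ε).card = P.card := by
  classical
  rw [colV1, Finset.card_image_of_injOn, Finset.card_attach]
  intro q hq q' hq' heq
  by_contra hne
  have hqq : (q : V × V) ≠ (q' : V × V) := fun h => hne (Subtype.ext h)
  have hd := hP.2 (q : V × V) q.2 (q' : V × V) q'.2 hqq
  by_cases h1 : ε q <;> by_cases h2 : ε q' <;>
    simp only [h1, h2, if_pos, if_neg, Bool.not_eq_true, if_true, if_false] at heq
  · exact hd.1 heq
  · exact hd.2.1 heq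
  · exact hd.2.2.1 heq
  · exact hd.2.2.2 heq

/-! ### counting orientations with forced values -/

lemma card_forced (P : Finset (V × V)) (I : Finset {x // x ∈ P})
    (σ : {x // x ∈ P} → Bool) :
    ((Finset.univ : Finset ({x // x ∈ P} → Bool)).filter
        (fun ε => ∀ i ∈ I, ε i = σ i)).card * 2 ^ I.card ≤ 2 ^ P.card := by
  classical
  have h2I : (2 : ℕ) ^ I.card = (Finset.univ : Finset ({i // i ∈ I} → Bool)).card := by
    rw [Finset.card_univ, Fintype.card_fun, Fintype.card_bool, Fintype.card_coe]
  have h2P : (2 : ℕ) ^ P.card = (Finset.univ : Finset ({x // x ∈ P} → Bool)).card := by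
    rw [Finset.card_univ, Fintype.card_fun, Fintype.card_bool, Fintype.card_coe]
  rw [h2I, h2P, ← Finset.card_product]
  apply Finset.card_le_card_of_injOn
    (fun z => fun x => if h : x ∈ I then z.2 ⟨x, h⟩ else z.1 x)
  · intro z _
    exact Finset.mem_univ _
  · intro z hz z' hz' heq
    simp only [Finset.mem_coe, Finset.mem_product, Finset.mem_filter] at hz hz'
    have hτ : z.2 = z'.2 := by
      funext i
      have h := congrFun heq (i : {x // x ∈ P})
      simp only [i.2, dif_pos] at h
      simpa using h
    have hε : z.1 = z'.1 := by
      funext x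
      by_cases hx : x ∈ I
      · rw [hz.1.2 x hx, hz'.1.2 x hx]
      · have h := congrFun heq x
        simpa [hx] using h
    exact Prod.ext hε hτ

/-- the key per-vertex bound on bad orientations -/
lemma bad_card {A : V → V → Prop} {P : Finset (V × V)} {R : Finset V}
    (hP : Good P) (hR1 : R.card ≤ 1)
    (hcov : ∀ v : V, v ∈ R ∨ v ∈ supp P)
    (hRP : ∀ v ∈ R, v ∉ supp P)
    {v : V} (hd : 1 ≤ dg A v)
    (huncov : ¬ ∃ p ∈ P, p.1 ∈ N A v ∧ p.2 ∈ N A v) :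
    ((Finset.univ : Finset ({x // x ∈ P} → Bool)).filter
        (fun ε => (∀ w ∈ N A v, w ∈ colV1 P ε) ∨ (∀ w ∈ N A v, w ∉ colV1 P ε))).card
      * 2 ^ (dg A v) ≤ 2 ^ (P.card + 1) := by
  classical
  push_neg at huncov
  obtain ⟨I, hI⟩ : ∃ I : Finset {x // x ∈ P},
      I = P.attach.filter
        (fun q : {x // x ∈ P} => (q : V × V).1 ∈ N A v ∨ (q : V × V).2 ∈ N A v) :=
    ⟨_, rfl⟩
  have hInb : (N A v ∩ supp P).card ≤ I.card := by
    rcases Finset.eq_empty_or_nonempty ((N A v) ∩ supp P) with hemp | ⟨w₀, hw₀⟩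
    · simp [hemp]
    · have hex : ∀ w ∈ (N A v) ∩ supp P, ∃ p ∈ P, w = p.1 ∨ w = p.2 := by
        intro w hw
        exact mem_supp.1 (Finset.mem_inter.1 hw).2
      choose f hf1 hf2 using hex
      have hmapI : ∀ (w) (h : w ∈ (N A v) ∩ supp P),
          (⟨f w h, hf1 w h⟩ : {x // x ∈ P}) ∈ I := by
        intro w h
        rw [hI, Finset.mem_filter]
        refine ⟨Finset.mem_attach _ _, ?_⟩
        have hwN : w ∈ N A v := (Finset.mem_inter.1 h).1
        rcases hf2 w h with h' | h'
        · exact Or.inl (h' ▸ hwN)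
        · exact Or.inr (h' ▸ hwN)
      apply Finset.card_le_card_of_injOn
        (fun w => if h : w ∈ (N A v) ∩ supp P then ⟨f w h, hf1 w h⟩ else ⟨f w₀ hw₀, hf1 w₀ hw₀⟩)
      · intro w hw
        simp only [Finset.mem_coe] at hw
        simp only [hw, dif_pos]
        exact hmapI w hw
      · intro w hw w' hw' heq
        simp only [Finset.mem_coe] at hw hw'
        simp only [hw, hw', dif_pos] at heq
        by_contra hne
        have hpair : f w hw = f w' hw' := by
          simpa using congrArg Subtype.val heq
        have hwN : w ∈ N A v := (Finset.mem_inter.1 hw).1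
        have hw'N : w' ∈ N A v := (Finset.mem_inter.1 hw').1
        have h12 := huncov (f w hw) (hf1 w hw)
        rcases hf2 w hw with h1 | h1 <;> rcases (hpair ▸ hf2 w' hw') with h2 | h2
        · exact hne (h1.trans h2.symm)
        · exact (h12 (h1 ▸ hwN)) (h2 ▸ hw'N)
        · exact (h12 (h2 ▸ hw'N)) (h1 ▸ hwN)
        · exact hne (h1.trans h2.symm)
  have hNsplit : dg A v ≤ I.card + (N A v ∩ R).card := by
    have hsub : N A v ⊆ (N A v ∩ supp P) ∪ (N A v ∩ R) := by
      intro w hw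
      rcases hcov w with h | h
      · exact Finset.mem_union_right _ (Finset.mem_inter.2 ⟨hw, h⟩)
      · exact Finset.mem_union_left _ (Finset.mem_inter.2 ⟨hw, h⟩)
    have := Finset.card_le_card hsub
    have hu := Finset.card_union_le (N A v ∩ supp P) (N A v ∩ R)
    unfold dg
    omega
  -- forced values for the two monochromatic events
  have hiff : ∀ (ε : {x // x ∈ P} → Bool) (q : {x // x ∈ P}),
      ((q : V × V).1 ∈ colV1 P ε ↔ ε q = true) ∧
      ((q : V × V).2 ∈ colV1 P ε ↔ ε q = false) := by
    intro ε q
    exact mem_colV1_iff hP ε q.2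
  have hforceT :
      (Finset.univ : Finset ({x // x ∈ P} → Bool)).filter
          (fun ε => ∀ w ∈ N A v, w ∈ colV1 P ε) ⊆
        (Finset.univ : Finset ({x // x ∈ P} → Bool)).filter
          (fun ε => ∀ i ∈ I, ε i = (fun q : {x // x ∈ P} => decide ((q : V × V).1 ∈ N A v)) i) := by
    intro ε hε
    simp only [Finset.mem_filter, Finset.mem_univ, true_and] at hε ⊢
    intro q hq
    rw [hI, Finset.mem_filter] at hq
    by_cases h1 : (q : V × V).1 ∈ N A v
    · have h2 : (q : V × V).1 ∈ colV1 P ε := hε _ h1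
      rw [(hiff ε q).1] at h2
      simp [h1, h2]
    · have h2 : (q : V × V).2 ∈ N A v := by tauto
      have h3 : (q : V × V).2 ∈ colV1 P ε := hε _ h2
      rw [(hiff ε q).2] at h3
      simp [h1, h3]
  have hforceF :
      (Finset.univ : Finset ({x // x ∈ P} → Bool)).filter
          (fun ε => ∀ w ∈ N A v, w ∉ colV1 P ε) ⊆
        (Finset.univ : Finset ({x // x ∈ P} → Bool)).filter
          (fun ε => ∀ i ∈ I, ε i = (fun q : {x // x ∈ P} => !decide ((q : V × V).1 ∈ N A v)) i) := by
    intro ε hε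
    simp only [Finset.mem_filter, Finset.mem_univ, true_and] at hε ⊢
    intro q hq
    rw [hI, Finset.mem_filter] at hq
    by_cases h1 : (q : V × V).1 ∈ N A v
    · have h2 : (q : V × V).1 ∉ colV1 P ε := hε _ h1
      rw [(hiff ε q).1] at h2
      simp only [Bool.not_eq_true] at h2
      simp [h1, h2]
    · have h2 : (q : V × V).2 ∈ N A v := by tauto
      have h3 : (q : V × V).2 ∉ colV1 P ε := hε _ h2
      rw [(hiff ε q).2] at h3
      simp only [Bool.not_eq_false] at h3
      simp [h1, h3]
  have hT := card_forced P I (fun q : {x // x ∈ P} => decide ((q : V × V).1 ∈ N A v))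
  have hF := card_forced P I (fun q : {x // x ∈ P} => !decide ((q : V × V).1 ∈ N A v))
  have hTle := Finset.card_le_card hforceT
  have hFle := Finset.card_le_card hforceF
  have hsub :
      (Finset.univ : Finset ({x // x ∈ P} → Bool)).filter
          (fun ε => (∀ w ∈ N A v, w ∈ colV1 P ε) ∨ (∀ w ∈ N A v, w ∉ colV1 P ε)) ⊆
        (Finset.univ : Finset ({x // x ∈ P} → Bool)).filter
            (fun ε => ∀ w ∈ N A v, w ∈ colV1 P ε) ∪
          (Finset.univ : Finset ({x // x ∈ P} → Bool)).filter
            (fun ε => ∀ w ∈ N A v, w ∉ colV1 P ε) := by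
    intro ε hε
    simp only [Finset.mem_filter, Finset.mem_univ, true_and, Finset.mem_union] at hε ⊢
    exact hε
  rcases Finset.eq_empty_or_nonempty ((N A v) ∩ R) with hNR | ⟨r, hr⟩
  · -- no leftover in the neighbourhood : I.card ≥ dg A v
    have hIc : dg A v ≤ I.card := by rw [hNR] at hNsplit; simpa using hNsplit
    have hpow : (2 : ℕ) ^ (dg A v) ≤ 2 ^ I.card :=
      Nat.pow_le_pow_right (by norm_num) hIc
    have hcb := Finset.card_union_le
      ((Finset.univ : Finset ({x // x ∈ P} → Bool)).filter
          (fun ε => ∀ w ∈ N A v, w ∈ colV1 P ε))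
      ((Finset.univ : Finset ({x // x ∈ P} → Bool)).filter
          (fun ε => ∀ w ∈ N A v, w ∉ colV1 P ε))
    have h1 := Finset.card_le_card hsub
    have hTfin := le_trans (Nat.mul_le_mul hTle hpow) hT
    have hFfin := le_trans (Nat.mul_le_mul hFle hpow) hF
    have hmul := Nat.mul_le_mul_right (2 ^ (dg A v)) (le_trans h1 hcb)
    rw [Nat.add_mul] at hmul
    have hps : (2 : ℕ) ^ (P.card + 1) = 2 ^ P.card * 2 := pow_succ 2 P.card
    rw [hps, Nat.mul_two]
    exact le_trans hmul (Nat.add_le_add hTfin hFfin)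
  · -- leftover vertex inside the neighbourhood : the "all inside V1" event is empty
    have hrN : r ∈ N A v := (Finset.mem_inter.1 hr).1
    have hrR : r ∈ R := (Finset.mem_inter.1 hr).2
    have hrnot : ∀ ε : {x // x ∈ P} → Bool, r ∉ colV1 P ε := fun ε =>
      notin_colV1 ε (hRP r hrR)
    have hsub2 :
        (Finset.univ : Finset ({x // x ∈ P} → Bool)).filter
            (fun ε => (∀ w ∈ N A v, w ∈ colV1 P ε) ∨ (∀ w ∈ N A v, w ∉ colV1 P ε)) ⊆
          (Finset.univ : Finset ({x // x ∈ P} → Bool)).filter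
              (fun ε => ∀ w ∈ N A v, w ∉ colV1 P ε) := by
      intro ε hε
      simp only [Finset.mem_filter, Finset.mem_univ, true_and] at hε ⊢
      rcases hε with h | h
      · exact absurd (h r hrN) (hrnot ε)
      · exact h
    have hIc : dg A v - 1 ≤ I.card := by
      have h2 : (N A v ∩ R).card ≤ R.card := Finset.card_le_card (Finset.inter_subset_right)
      apply Nat.sub_le_iff_le_add.2
      exact le_trans hNsplit (Nat.add_le_add_left (le_trans h2 hR1) _)
    have hpow : (2 : ℕ) ^ (dg A v - 1) ≤ 2 ^ I.card :=
      Nat.pow_le_pow_right (by norm_num) hIc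
    have h1 := Finset.card_le_card (hsub2.trans hforceF)
    have h2 := le_trans (Nat.mul_le_mul h1 hpow) hF
    have hdg2 : (2 : ℕ) ^ (dg A v) = 2 ^ (dg A v - 1) * 2 := by
      rw [← pow_succ]
      congr 1
      exact (Nat.succ_pred_eq_of_pos hd).symm
    rw [hdg2, ← Nat.mul_assoc, pow_succ]
    exact Nat.mul_le_mul_right 2 h2
/-! ### the numerical bound -/

lemma half_pow_succ (n : ℕ) : (2:ℚ)⁻¹ ^ (n+1) + (2:ℚ)⁻¹ ^ (n+1) = (2:ℚ)⁻¹ ^ n := by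
  rw [pow_succ]
  ring

lemma geo_expand (d K : ℕ) (hdK : d ≤ K) :
    (2:ℚ)⁻¹ ^ d = (2:ℚ)⁻¹ ^ (K+1) + ∑ k ∈ Finset.Icc d K, (2:ℚ)⁻¹ ^ (k+1) := by
  induction K, hdK using Nat.le_induction with
  | base =>
    rw [Finset.Icc_self, Finset.sum_singleton]
    exact (half_pow_succ d).symm
  | succ n hdn ih =>
    rw [Finset.sum_Icc_succ_top (by omega : d ≤ n + 1)]
    have h1 := half_pow_succ (n + 1)
    linarith [ih, h1]

lemma abel_bound (W : Finset V) (d : V → ℕ) (t γ K : ℕ)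
    (h4 : ∀ v ∈ W, 4 ≤ d v)
    (hK : ∀ v ∈ W, d v ≤ K) (hK5 : 5 ≤ K)
    (hc4 : (W.filter (fun v => d v ≤ 4)).card + γ ≤ t)
    (hck : ∀ k : ℕ, 5 ≤ k → (W.filter (fun v => d v ≤ k)).card + γ ≤ 2 * k + 1)
    (ht : t ≤ 2 * γ + 2) :
    ∑ v ∈ W, ((2:ℚ)⁻¹) ^ (d v) < 1 / 2 := by
  classical
  -- expand every term
  have hstep1 : ∑ v ∈ W, ((2:ℚ)⁻¹) ^ (d v) =
      W.card * (2:ℚ)⁻¹ ^ (K+1) +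
        ∑ k ∈ Finset.range (K+1),
          ((W.filter (fun v => d v ≤ k)).card : ℚ) * (2:ℚ)⁻¹ ^ (k+1) := by
    have h1 : ∀ v ∈ W, ((2:ℚ)⁻¹) ^ (d v) =
        (2:ℚ)⁻¹ ^ (K+1) + ∑ k ∈ Finset.Icc (d v) K, (2:ℚ)⁻¹ ^ (k+1) := by
      intro v hv
      exact geo_expand (d v) K (hK v hv)
    rw [Finset.sum_congr rfl h1, Finset.sum_add_distrib, Finset.sum_const,
      nsmul_eq_mul]
    congr 1
    have h2 : ∀ v ∈ W, ∑ k ∈ Finset.Icc (d v) K, (2:ℚ)⁻¹ ^ (k+1) =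
        ∑ k ∈ Finset.range (K+1), if d v ≤ k then (2:ℚ)⁻¹ ^ (k+1) else 0 := by
      intro v hv
      rw [← Finset.sum_filter]
      congr 1
      ext k
      simp only [Finset.mem_Icc, Finset.mem_filter, Finset.mem_range]
      omega
    rw [Finset.sum_congr rfl h2, Finset.sum_comm]
    apply Finset.sum_congr rfl
    intro k _
    rw [← Finset.sum_filter, Finset.sum_const, nsmul_eq_mul]
  -- the tail bound by induction
  have hH : ∀ K' : ℕ, 5 ≤ K' →
      (∑ k ∈ Finset.Icc 5 K', ((2*k+1 : ℚ) - γ) * (2:ℚ)⁻¹ ^ (k+1)) +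
        ((2*K'+5 : ℚ) - γ) * (2:ℚ)⁻¹ ^ (K'+1) ≤ (13 - γ)/32 := by
    intro K'
    intro hK'
    induction K', hK' using Nat.le_induction with
    | base =>
      rw [Finset.Icc_self, Finset.sum_singleton]
      norm_num
      ring_nf
      linarith
    | succ n hn ih =>
      rw [Finset.sum_Icc_succ_top (by omega : 5 ≤ n + 1)]
      have h1 : (2:ℚ)⁻¹ ^ (n+1+1) = (2:ℚ)⁻¹ ^ (n+1) * 2⁻¹ := pow_succ _ _
      push_cast at ih ⊢
      rw [h1]
      ring_nf
      ring_nf at ih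
      linarith [ih]
  -- bound each coefficient
  have hzero : ∀ k ∈ Finset.range (K+1), k ≤ 3 →
      ((W.filter (fun v => d v ≤ k)).card : ℚ) = 0 := by
    intro k _ hk3
    rw [Finset.filter_false_of_mem, Finset.card_empty, Nat.cast_zero]
    intro v hv
    have := h4 v hv
    omega
  -- split the range
  have hsplit : Finset.range (K+1) = Finset.range 5 ∪ Finset.Icc 5 K := by
    ext k
    simp only [Finset.mem_range, Finset.mem_union, Finset.mem_Icc]
    omega
  have hdisj : Disjoint (Finset.range 5) (Finset.Icc 5 K) := by
    rw [Finset.disjoint_left]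
    intro k hk hk'
    simp only [Finset.mem_range] at hk
    simp only [Finset.mem_Icc] at hk'
    omega
  have hsum2 : ∑ k ∈ Finset.range (K+1),
      ((W.filter (fun v => d v ≤ k)).card : ℚ) * (2:ℚ)⁻¹ ^ (k+1) =
      (∑ k ∈ Finset.range 5,
        ((W.filter (fun v => d v ≤ k)).card : ℚ) * (2:ℚ)⁻¹ ^ (k+1)) +
      ∑ k ∈ Finset.Icc 5 K,
        ((W.filter (fun v => d v ≤ k)).card : ℚ) * (2:ℚ)⁻¹ ^ (k+1) := by
    rw [hsplit, Finset.sum_union hdisj]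
  -- the small range: only k = 4 contributes
  have hsmall : ∑ k ∈ Finset.range 5,
      ((W.filter (fun v => d v ≤ k)).card : ℚ) * (2:ℚ)⁻¹ ^ (k+1) =
      ((W.filter (fun v => d v ≤ 4)).card : ℚ) * (2:ℚ)⁻¹ ^ 5 := by
    rw [Finset.sum_range_succ, Finset.sum_range_succ, Finset.sum_range_succ,
      Finset.sum_range_succ, Finset.sum_range_succ]
    have e0 : ((W.filter (fun v => d v ≤ 0)).card : ℚ) = 0 := by
      rw [Finset.filter_false_of_mem, Finset.card_empty, Nat.cast_zero]
      intro v hv; have := h4 v hv; omega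
    have e1 : ((W.filter (fun v => d v ≤ 1)).card : ℚ) = 0 := by
      rw [Finset.filter_false_of_mem, Finset.card_empty, Nat.cast_zero]
      intro v hv; have := h4 v hv; omega
    have e2 : ((W.filter (fun v => d v ≤ 2)).card : ℚ) = 0 := by
      rw [Finset.filter_false_of_mem, Finset.card_empty, Nat.cast_zero]
      intro v hv; have := h4 v hv; omega
    have e3 : ((W.filter (fun v => d v ≤ 3)).card : ℚ) = 0 := by
      rw [Finset.filter_false_of_mem, Finset.card_empty, Nat.cast_zero]
      intro v hv; have := h4 v hv; omega
    rw [e0, e1, e2, e3]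
    ring
  -- coefficient bounds
  have hpos : ∀ k : ℕ, (0:ℚ) < (2:ℚ)⁻¹ ^ k := fun k => pow_pos (by norm_num) k
  have hcoef : ∀ k ∈ Finset.Icc 5 K,
      ((W.filter (fun v => d v ≤ k)).card : ℚ) * (2:ℚ)⁻¹ ^ (k+1) ≤
      ((2*k+1 : ℚ) - γ) * (2:ℚ)⁻¹ ^ (k+1) := by
    intro k hk
    simp only [Finset.mem_Icc] at hk
    apply mul_le_mul_of_nonneg_right _ (le_of_lt (hpos (k+1)))
    have h1 := hck k hk.1
    have h2 : ((W.filter (fun v => d v ≤ k)).card + γ : ℚ) ≤ ((2*k+1 : ℕ) : ℚ) := by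
      exact_mod_cast h1
    push_cast at h2
    linarith
  have hWcard : (W.card : ℚ) ≤ (2*K+1 : ℚ) - γ := by
    have h1 : W.filter (fun v => d v ≤ K) = W := by
      apply Finset.filter_true_of_mem
      intro v hv; exact hK v hv
    have h2 := hck K hK5
    rw [h1] at h2
    have h3 : ((W.card : ℚ) + γ) ≤ ((2*K+1 : ℕ) : ℚ) := by exact_mod_cast h2
    push_cast at h3
    linarith
  have hc4' : ((W.filter (fun v => d v ≤ 4)).card : ℚ) ≤ (t : ℚ) - γ := by
    have h3 : (((W.filter (fun v => d v ≤ 4)).card : ℚ) + γ) ≤ (t : ℚ) := by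
      exact_mod_cast hc4
    linarith
  -- put everything together
  have htail : ∑ k ∈ Finset.Icc 5 K,
      ((W.filter (fun v => d v ≤ k)).card : ℚ) * (2:ℚ)⁻¹ ^ (k+1) +
      (W.card : ℚ) * (2:ℚ)⁻¹ ^ (K+1) ≤ (13 - γ)/32 := by
    have h1 := Finset.sum_le_sum hcoef
    have h2 := hH K hK5
    have h3 : (W.card : ℚ) * (2:ℚ)⁻¹ ^ (K+1) ≤ ((2*K+5 : ℚ) - γ) * (2:ℚ)⁻¹ ^ (K+1) := by
      apply mul_le_mul_of_nonneg_right _ (le_of_lt (hpos (K+1)))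
      linarith [hWcard]
    linarith
  rw [hstep1, hsum2, hsmall]
  have hfinal : ((W.filter (fun v => d v ≤ 4)).card : ℚ) * (2:ℚ)⁻¹ ^ 5 ≤
      ((t : ℚ) - γ) / 32 := by
    have : ((2:ℚ)⁻¹) ^ 5 = 1/32 := by norm_num
    rw [this]
    linarith [hc4']
  have hts : ((t : ℚ) - γ)/32 + (13 - γ)/32 ≤ 15/32 := by
    have h1 : (t : ℚ) ≤ 2*γ + 2 := by exact_mod_cast ht
    linarith
  have : (15:ℚ)/32 < 1/2 := by norm_num
  linarith

/-! ### assembling everything -/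

lemma supp_union (P Q : Finset (V × V)) : supp (P ∪ Q) = supp P ∪ supp Q := by
  ext v
  simp only [mem_supp, Finset.mem_union]
  constructor
  · rintro ⟨p, hp | hp, h⟩
    · exact Or.inl ⟨p, hp, h⟩
    · exact Or.inr ⟨p, hp, h⟩
  · rintro (⟨p, hp, h⟩ | ⟨p, hp, h⟩)
    · exact ⟨p, Or.inl hp, h⟩
    · exact ⟨p, Or.inr hp, h⟩

lemma supp_card {P : Finset (V × V)} (hP : Good P) : (supp P).card = 2 * P.card := by
  classical
  rw [supp, Finset.card_biUnion]
  · rw [Finset.sum_congr rfl (fun p hp => ?_), Finset.sum_const, smul_eq_mul, Nat.mul_comm]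
    rw [Finset.card_insert_of_notMem (by simp [hP.1 p hp]), Finset.card_singleton]
  · intro p hp q hq hpq
    have hd := hP.2 p hp q hq hpq
    simp only [Finset.disjoint_left, Finset.mem_insert, Finset.mem_singleton]
    rintro x (rfl | rfl) (h | h)
    · exact hd.1 h
    · exact hd.2.1 h
    · exact hd.2.2.1 h
    · exact hd.2.2.2 h

lemma exists_balanced (A : V → V → Prop)
    (hirr : ∀ v : V, ¬ A v v)
    (htot : ∀ u v : V, u ≠ v → Xor' (A u v) (A v u))
    (hδ : ∀ v : V, 4 ≤ dg A v) :
    ∃ F : Finset V, 2 * F.card ≤ Fintype.card V ∧ Fintype.card V ≤ 2 * F.card + 1 ∧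
      ∀ v : V, (∃ w ∈ N A v, w ∈ F) ∧ ∃ w ∈ N A v, w ∉ F := by
  classical
  obtain ⟨Q, C, hGoodQ, hCL, hcovC, hC4, hL2γ⟩ := exists_cover hirr htot hδ
  obtain ⟨P', R, hGoodP', hP'S, hRS, hR1, hcov', hRP', hsum'⟩ :=
    pairing_ext (Finset.univ \ supp Q).card (Finset.univ \ supp Q) rfl
  set P : Finset (V × V) := Q ∪ P' with hPdef
  have hQP'disj : ∀ p ∈ Q, ∀ q ∈ P', p.1 ≠ q.1 ∧ p.1 ≠ q.2 ∧ p.2 ≠ q.1 ∧ p.2 ≠ q.2 := by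
    intro p hp q hq
    have h1 : q.1 ∉ supp Q := (Finset.mem_sdiff.1 (hP'S q hq).1).2
    have h2 : q.2 ∉ supp Q := (Finset.mem_sdiff.1 (hP'S q hq).2).2
    have hp1 : p.1 ∈ supp Q := mem_supp.2 ⟨p, hp, Or.inl rfl⟩
    have hp2 : p.2 ∈ supp Q := mem_supp.2 ⟨p, hp, Or.inr rfl⟩
    exact ⟨fun h => h1 (h ▸ hp1), fun h => h2 (h ▸ hp1),
           fun h => h1 (h ▸ hp2), fun h => h2 (h ▸ hp2)⟩
  have hGoodP : Good P := by
    constructor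
    · intro p hp
      rcases Finset.mem_union.1 hp with h | h
      · exact hGoodQ.1 p h
      · exact hGoodP'.1 p h
    · intro p hp q hq hpq
      rcases Finset.mem_union.1 hp with h1 | h1 <;> rcases Finset.mem_union.1 hq with h2 | h2
      · exact hGoodQ.2 p h1 q h2 hpq
      · exact hQP'disj p h1 q h2
      · obtain ⟨g1, g2, g3, g4⟩ := hQP'disj q h2 p h1
        exact ⟨fun h => g1 h.symm, fun h => g3 h.symm, fun h => g2 h.symm, fun h => g4 h.symm⟩
      · exact hGoodP'.2 p h1 q h2 hpq
  have hQdisjP' : Disjoint Q P' := by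
    rw [Finset.disjoint_left]
    intro p hp hp'
    have h1 : p.1 ∉ supp Q := (Finset.mem_sdiff.1 (hP'S p hp').1).2
    exact h1 (mem_supp.2 ⟨p, hp, Or.inl rfl⟩)
  have hcardP : P.card = Q.card + P'.card := Finset.card_union_of_disjoint hQdisjP'
  have hRsupp : ∀ v ∈ R, v ∉ supp P := by
    intro v hv
    have h1 : v ∈ Finset.univ \ supp Q := hRS hv
    rw [hPdef, supp_union, Finset.mem_union]
    rintro (h | h)
    · exact (Finset.mem_sdiff.1 h1).2 h
    · exact hRP' v hv h
  have hcovV : ∀ v : V, v ∈ R ∨ v ∈ supp P := by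
    intro v
    by_cases h : v ∈ supp Q
    · exact Or.inr (by rw [hPdef, supp_union]; exact Finset.mem_union_left _ h)
    · rcases hcov' v (Finset.mem_sdiff.2 ⟨Finset.mem_univ _, h⟩) with h1 | h1
      · exact Or.inl h1
      · exact Or.inr (by rw [hPdef, supp_union]; exact Finset.mem_union_right _ h1)
  have hcardV : Fintype.card V = 2 * P.card + R.card := by
    have h1 : (Finset.univ \ supp Q).card = Fintype.card V - (supp Q).card := by
      rw [Finset.card_sdiff_of_subset (Finset.subset_univ _), Finset.card_univ]
    have h2 : (supp Q).card = 2 * Q.card := supp_card hGoodQ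
    have h3 : (supp Q).card ≤ Fintype.card V := by
      rw [← Finset.card_univ]
      exact Finset.card_le_card (Finset.subset_univ _)
    rw [hcardP]
    omega
  -- the set of uncovered vertices
  set W : Finset V := Finset.univ.filter
    (fun v => ¬ ∃ p ∈ P, p.1 ∈ N A v ∧ p.2 ∈ N A v) with hW
  have hWC : ∀ v ∈ C, v ∉ W := by
    intro v hv hvW
    rw [hW, Finset.mem_filter] at hvW
    obtain ⟨p, hp, h1, h2⟩ := hcovC v hv
    exact hvW.2 ⟨p, Finset.mem_union_left _ hp, h1, h2⟩
  -- counting bad orientations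
  set B : Finset ({x // x ∈ P} → Bool) := Finset.univ.filter
    (fun ε => ∃ v ∈ W, (∀ w ∈ N A v, w ∈ colV1 P ε) ∨ (∀ w ∈ N A v, w ∉ colV1 P ε)) with hB
  have hBsub : B ⊆ W.biUnion (fun v => Finset.univ.filter
      (fun ε => (∀ w ∈ N A v, w ∈ colV1 P ε) ∨ (∀ w ∈ N A v, w ∉ colV1 P ε))) := by
    intro ε hε
    rw [hB, Finset.mem_filter] at hε
    obtain ⟨v, hv, h⟩ := hε.2
    exact Finset.mem_biUnion.2 ⟨v, hv, Finset.mem_filter.2 ⟨Finset.mem_univ _, h⟩⟩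
  have hBcard : B.card ≤ ∑ v ∈ W, ((Finset.univ : Finset ({x // x ∈ P} → Bool)).filter
      (fun ε => (∀ w ∈ N A v, w ∈ colV1 P ε) ∨ (∀ w ∈ N A v, w ∉ colV1 P ε))).card :=
    le_trans (Finset.card_le_card hBsub) (Finset.card_biUnion_le)
  -- per-vertex bound, in ℚ
  have hperv : ∀ v ∈ W, (((Finset.univ : Finset ({x // x ∈ P} → Bool)).filter
      (fun ε => (∀ w ∈ N A v, w ∈ colV1 P ε) ∨ (∀ w ∈ N A v, w ∉ colV1 P ε))).card : ℚ)
      ≤ (2:ℚ) ^ (P.card + 1) * ((2:ℚ)⁻¹) ^ (dg A v) := by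
    intro v hv
    rw [hW, Finset.mem_filter] at hv
    have hb := bad_card hGoodP hR1 hcovV hRsupp (by have := hδ v; omega : 1 ≤ dg A v) hv.2
    have hbq : (((Finset.univ : Finset ({x // x ∈ P} → Bool)).filter
        (fun ε => (∀ w ∈ N A v, w ∈ colV1 P ε) ∨ (∀ w ∈ N A v, w ∉ colV1 P ε))).card : ℚ)
        * (2:ℚ) ^ (dg A v) ≤ (2:ℚ) ^ (P.card + 1) := by
      exact_mod_cast hb
    rw [inv_pow, ← div_eq_mul_inv, le_div_iff₀ (by positivity)]
    exact hbq
  -- the numeric bound for W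
  have habel : ∑ v ∈ W, ((2:ℚ)⁻¹) ^ (dg A v) < 1/2 := by
    apply abel_bound W (dg A) (Finset.univ.filter (fun v => dg A v ≤ 4)).card C.card
      (Fintype.card V + 5)
    · intro v _; exact hδ v
    · intro v _
      have : dg A v ≤ Fintype.card V := by
        rw [dg, ← Finset.card_univ]
        exact Finset.card_le_card (Finset.filter_subset _ _)
      omega
    · omega
    · -- hc4
      have hsub : (W.filter (fun v => dg A v ≤ 4)) ∪ C ⊆
          Finset.univ.filter (fun v => dg A v ≤ 4) := by
        intro v hv
        rcases Finset.mem_union.1 hv with h | h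
        · exact Finset.mem_filter.2 ⟨Finset.mem_univ _, (Finset.mem_filter.1 h).2⟩
        · exact hCL h
      have hdisj : Disjoint (W.filter (fun v => dg A v ≤ 4)) C := by
        rw [Finset.disjoint_left]
        intro v hv hvC
        exact hWC v hvC (Finset.mem_of_mem_filter v hv)
      have := Finset.card_le_card hsub
      rw [Finset.card_union_of_disjoint hdisj] at this
      exact this
    · -- hck
      intro k hk5
      have hsub : (W.filter (fun v => dg A v ≤ k)) ∪ C ⊆
          Finset.univ.filter (fun v => dg A v ≤ k) := by
        intro v hv
        rcases Finset.mem_union.1 hv with h | h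
        · exact Finset.mem_filter.2 ⟨Finset.mem_univ _, (Finset.mem_filter.1 h).2⟩
        · have := (Finset.mem_filter.1 (hCL h)).2
          exact Finset.mem_filter.2 ⟨Finset.mem_univ _, by omega⟩
      have hdisj : Disjoint (W.filter (fun v => dg A v ≤ k)) C := by
        rw [Finset.disjoint_left]
        intro v hv hvC
        exact hWC v hvC (Finset.mem_of_mem_filter v hv)
      have h1 := Finset.card_le_card hsub
      rw [Finset.card_union_of_disjoint hdisj] at h1
      have h2 := card_low_le hirr htot (V := V) (A := A) k
      omega
    · exact hL2γ
  -- conclude : strictly fewer bad orientations than orientations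
  have hBlt : (B.card : ℚ) < (2:ℚ) ^ P.card := by
    have h1 : (B.card : ℚ) ≤ ∑ v ∈ W, (2:ℚ) ^ (P.card + 1) * ((2:ℚ)⁻¹) ^ (dg A v) := by
      calc (B.card : ℚ) ≤ (∑ v ∈ W, (((Finset.univ : Finset ({x // x ∈ P} → Bool)).filter
          (fun ε => (∀ w ∈ N A v, w ∈ colV1 P ε) ∨ (∀ w ∈ N A v, w ∉ colV1 P ε))).card : ℚ)) := by
            exact_mod_cast hBcard
        _ ≤ _ := Finset.sum_le_sum hperv
    rw [← Finset.mul_sum] at h1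
    have h2 : (2:ℚ) ^ (P.card + 1) * ∑ v ∈ W, ((2:ℚ)⁻¹) ^ (dg A v) <
        (2:ℚ) ^ (P.card + 1) * (1/2) := by
      apply mul_lt_mul_of_pos_left habel (by positivity)
    have h3 : (2:ℚ) ^ (P.card + 1) * (1/2 : ℚ) = 2 ^ P.card := by
      rw [pow_succ]; ring
    linarith
  have hBltn : B.card < 2 ^ P.card := by exact_mod_cast hBlt
  have hcards : (Finset.univ : Finset ({x // x ∈ P} → Bool)).card = 2 ^ P.card := by
    rw [Finset.card_univ, Fintype.card_fun, Fintype.card_bool, Fintype.card_coe]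
  obtain ⟨ε, hε⟩ : ∃ ε : {x // x ∈ P} → Bool, ε ∉ B := by
    by_contra hcon
    push_neg at hcon
    have : (Finset.univ : Finset ({x // x ∈ P} → Bool)) ⊆ B := fun ε _ => hcon ε
    have := Finset.card_le_card this
    omega
  -- the desired partition
  refine ⟨colV1 P ε, ?_, ?_, ?_⟩
  · rw [card_colV1 hGoodP, hcardV]; omega
  · rw [card_colV1 hGoodP, hcardV]; omega
  · intro v
    by_cases hv : v ∈ W
    · have hnm : ¬ ((∀ w ∈ N A v, w ∈ colV1 P ε) ∨ (∀ w ∈ N A v, w ∉ colV1 P ε)) := by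
        intro h
        exact hε (by rw [hB, Finset.mem_filter]; exact ⟨Finset.mem_univ _, v, hv, h⟩)
      push_neg at hnm
      obtain ⟨⟨w1, hw1, hw1'⟩, ⟨w2, hw2, hw2'⟩⟩ := hnm
      exact ⟨⟨w2, hw2, by simpa using hw2'⟩, ⟨w1, hw1, hw1'⟩⟩
    · rw [hW, Finset.mem_filter] at hv
      simp only [Finset.mem_univ, true_and, not_not] at hv
      obtain ⟨p, hp, h1, h2⟩ := hv
      have hm := mem_colV1_iff hGoodP ε hp
      by_cases hb : ε ⟨p, hp⟩ = true
      · exact ⟨⟨p.1, h1, hm.1.2 hb⟩, ⟨p.2, h2, by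
          intro hcon
          rw [hm.2] at hcon
          rw [hcon] at hb
          exact Bool.false_ne_true hb⟩⟩
      · have hbf : ε ⟨p, hp⟩ = false := by
          cases h : ε ⟨p, hp⟩
          · rfl
          · exact absurd h hb
        exact ⟨⟨p.2, h2, hm.2.2 hbf⟩, ⟨p.1, h1, by
          intro hcon
          rw [hm.1] at hcon
          exact hb hcon⟩⟩


end Stmt10

/-- A tournament: between any two distinct vertices there is exactly one arc,
and there are no loops. -/
def IsTournament {V : Type*} (A : V → V → Prop) : Prop :=
  (∀ v : V, ¬ A v v) ∧ ∀ u v : V, u ≠ v → Xor' (A u v) (A v u)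

/-- Every tournament with minimum out-degree at least 4 has a balanced partition
`(V1, V1ᶜ)` of its vertex set such that the minimum out-degrees of the two induced
subdigraphs and of the bipartite subdigraph of arcs between the parts are all at
least 1. -/
theorem stmt10 {V : Type*} [Fintype V] (A : V → V → Prop) (hT : IsTournament A)
    (hδ : ∀ v : V, 4 ≤ {w | A v w}.ncard) :
    ∃ V1 : Set V,
      |(V1.ncard : ℤ) - ((V1ᶜ : Set V).ncard : ℤ)| ≤ 1 ∧
      (∀ v ∈ V1, 1 ≤ {w | w ∈ V1 ∧ A v w}.ncard) ∧
      (∀ v ∈ (V1ᶜ : Set V), 1 ≤ {w | w ∈ V1ᶜ ∧ A v w}.ncard) ∧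
      (∀ v : V, 1 ≤ {w | A v w ∧ (v ∈ V1 ↔ w ∉ V1)}.ncard) := by
  classical
  obtain ⟨hirr, htot⟩ := hT
  have hdg : ∀ v : V, 4 ≤ Stmt10.dg A v := by
    intro v
    have h1 : {w | A v w} = ↑(Stmt10.N A v) := by
      ext w
      simp [Stmt10.mem_N]
    have h2 := hδ v
    rw [h1, Set.ncard_coe_finset] at h2
    exact h2
  obtain ⟨F, hb1, hb2, hF⟩ := Stmt10.exists_balanced A hirr htot hdg
  have hFle : F.card ≤ Fintype.card V := by
    rw [← Finset.card_univ]
    exact Finset.card_le_card (Finset.subset_univ _)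
  refine ⟨(↑F : Set V), ?_, ?_, ?_, ?_⟩
  · rw [show (((↑F : Set V))ᶜ) = (↑(Fᶜ) : Set V) by rw [Finset.coe_compl],
      Set.ncard_coe_finset, Set.ncard_coe_finset, Finset.card_compl]
    rw [abs_le]
    constructor
    · push_cast [Nat.cast_sub hFle]
      omega
    · push_cast [Nat.cast_sub hFle]
      omega
  · intro v hv
    obtain ⟨⟨w1, hw1, hw1'⟩, _⟩ := hF v
    have hne : {w | w ∈ (↑F : Set V) ∧ A v w}.Nonempty :=
      ⟨w1, ⟨hw1', Stmt10.mem_N.1 hw1⟩⟩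
    have hpos := (Set.ncard_pos (Set.toFinite _)).2 hne
    omega
  · intro v hv
    obtain ⟨_, ⟨w2, hw2, hw2'⟩⟩ := hF v
    have hne : {w | w ∈ ((↑F : Set V))ᶜ ∧ A v w}.Nonempty :=
      ⟨w2, ⟨by simpa using hw2', Stmt10.mem_N.1 hw2⟩⟩
    have hpos := (Set.ncard_pos (Set.toFinite _)).2 hne
    omega
  · intro v
    obtain ⟨⟨w1, hw1, hw1'⟩, ⟨w2, hw2, hw2'⟩⟩ := hF v
    by_cases hvF : v ∈ F
    · have hne : {w | A v w ∧ (v ∈ (↑F : Set V) ↔ w ∉ (↑F : Set V))}.Nonempty :=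
        ⟨w2, ⟨Stmt10.mem_N.1 hw2, by simp [hvF, hw2']⟩⟩
      have hpos := (Set.ncard_pos (Set.toFinite _)).2 hne
      omega
    · have hne : {w | A v w ∧ (v ∈ (↑F : Set V) ↔ w ∉ (↑F : Set V))}.Nonempty :=
        ⟨w1, ⟨Stmt10.mem_N.1 hw1, by simp [hvF, hw1']⟩⟩
      have hpos := (Set.ncard_pos (Set.toFinite _)).2 hne
      omega
end

section
/- There exists an absolute positive constant c2 such that for infinitely many positive integers k there is a tournament T with minimum out-degree at least 2k + c2·√k such that for every partition of V(T) into two disjoint sets V1 and V2, at least one of the minimum out-degrees of T[V1], T[V2] and T[V1,V2] is smaller than k. -/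
set_option maxHeartbeats 1600000

open Finset

section Aux

lemma exists_prime_3mod4 (n : ℕ) : ∃ p, n ≤ p ∧ p.Prime ∧ p % 4 = 3 := by
  obtain ⟨p, hgt, hp, hmod⟩ :=
    Nat.forall_exists_prime_gt_and_eq_mod (q := 4) (a := 3) (by decide) n
  refine ⟨p, hgt.le, hp, ?_⟩
  have := congrArg ZMod.val hmod
  rwa [ZMod.val_natCast] at this

lemma quadChar_shift_sum {q : ℕ} [Fact q.Prime] (hc : ringChar (ZMod q) ≠ 2)
    {b : ZMod q} (hb : b ≠ 0) :
    ∑ x : ZMod q, quadraticChar (ZMod q) x * quadraticChar (ZMod q) (x + b) = -1 := by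
  classical
  set χ := quadraticChar (ZMod q) with hχ
  have key : ∀ x : ZMod q, x ≠ 0 → χ x * χ (x + b) = χ (1 + b * x⁻¹) := by
    intro x hx
    have hxb : x + b = x * (1 + b * x⁻¹) := by field_simp
    rw [hxb, map_mul, ← mul_assoc, ← sq, quadraticChar_sq_one hx, one_mul]
  have step1 : ∑ x : ZMod q, χ x * χ (x + b) = ∑ x ∈ Finset.univ.erase 0, χ (1 + b * x⁻¹) := by
    rw [← Finset.sum_erase (a := (0 : ZMod q)) _ (by simp [hχ])]
    exact Finset.sum_congr rfl (fun x hx => key x (Finset.ne_of_mem_erase hx))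
  have step2 : ∑ x ∈ Finset.univ.erase (0 : ZMod q), χ (1 + b * x⁻¹)
      = ∑ y ∈ Finset.univ.erase (1 : ZMod q), χ y := by
    apply Finset.sum_bij' (fun x _ => 1 + b * x⁻¹) (fun y _ => b * (y - 1)⁻¹)
    · intro x hx
      have hx0 : x ≠ 0 := Finset.ne_of_mem_erase hx
      simp only [Finset.mem_erase, Finset.mem_univ, and_true]
      intro h
      have h0 : b * x⁻¹ = 0 := by linear_combination h
      rcases mul_eq_zero.mp h0 with h' | h'
      · exact hb h'
      · exact hx0 (inv_eq_zero.mp h')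
    · intro y hy
      have hy1 : y - 1 ≠ 0 := sub_ne_zero.mpr (Finset.ne_of_mem_erase hy)
      simp only [Finset.mem_erase, Finset.mem_univ, and_true]
      exact mul_ne_zero hb (inv_ne_zero hy1)
    · intro x hx
      have hx0 : x ≠ 0 := Finset.ne_of_mem_erase hx
      field_simp
      rw [add_sub_cancel_left, div_self hb]
    · intro y hy
      have hy1 : y - 1 ≠ 0 := sub_ne_zero.mpr (Finset.ne_of_mem_erase hy)
      field_simp
      ring
    · intro x hx; rfl
  have step3 : ∑ y ∈ Finset.univ.erase (1 : ZMod q), χ y = -1 := by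
    rw [Finset.sum_erase_eq_sub (by simp), quadraticChar_sum_zero hc]
    simp [hχ]
  rw [step1, step2, step3]

variable {q : ℕ} [Fact q.Prime]

lemma paley_col_sum (hc : ringChar (ZMod q) ≠ 2) (w : ZMod q) :
    ∑ v : ZMod q, quadraticChar (ZMod q) (w - v) = 0 := by
  rw [← quadraticChar_sum_zero hc]
  exact Fintype.sum_equiv (Equiv.subLeft w) _ _ (fun v => rfl)

lemma paley_diag_sum (w : ZMod q) :
    ∑ v : ZMod q, quadraticChar (ZMod q) (w - v) * quadraticChar (ZMod q) (w - v)
      = (q : ℤ) - 1 := by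
  classical
  have : ∀ v : ZMod q, quadraticChar (ZMod q) (w - v) * quadraticChar (ZMod q) (w - v)
      = if v = w then 0 else 1 := by
    intro v
    by_cases h : v = w
    · simp [h]
    · have : w - v ≠ 0 := sub_ne_zero.mpr (Ne.symm h)
      rw [← sq, quadraticChar_sq_one this, if_neg h]
  rw [Finset.sum_congr rfl (fun v _ => this v)]
  have h2 : ∀ v : ZMod q, (if v = w then (0:ℤ) else 1) = 1 - (if v = w then 1 else 0) := by
    intro v; split <;> ring
  rw [Finset.sum_congr rfl (fun v _ => h2 v), Finset.sum_sub_distrib,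
    Finset.sum_ite_eq' Finset.univ w (fun _ => (1:ℤ))]
  simp [Finset.card_univ, ZMod.card]

lemma paley_cross_sum (hc : ringChar (ZMod q) ≠ 2) {w w' : ZMod q} (hww : w ≠ w') :
    ∑ v : ZMod q, quadraticChar (ZMod q) (w - v) * quadraticChar (ZMod q) (w' - v) = -1 := by
  have hb : w' - w ≠ 0 := sub_ne_zero.mpr (Ne.symm hww)
  rw [← quadChar_shift_sum hc hb]
  apply Fintype.sum_equiv (Equiv.subLeft w)
  intro x
  rw [show w' - x = w - x + (w' - w) from by ring, Equiv.subLeft_apply]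

lemma paley_unbalanced (hc : ringChar (ZMod q) ≠ 2) (ε : ZMod q → ℤ)
    (hε : ∀ w, ε w = 1 ∨ ε w = -1) :
    ∃ v : ZMod q,
      (q : ℤ) ≤ ((∑ w : ZMod q, quadraticChar (ZMod q) (w - v) * ε w) + ∑ w : ZMod q, ε w)^2 := by
  classical
  set χ := quadraticChar (ZMod q) with hχ
  set σ := ∑ w : ZMod q, ε w with hσ
  set f : ZMod q → ℤ := fun v => ∑ w : ZMod q, χ (w - v) * ε w with hf
  have hε2 : ∀ w, ε w * ε w = 1 := by
    intro w; rcases hε w with h | h <;> rw [h] <;> ring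
  have hcard : (Finset.univ : Finset (ZMod q)).card = q := by
    rw [Finset.card_univ, ZMod.card]
  have S1 : ∑ v : ZMod q, f v = 0 := by
    rw [hf]
    rw [Finset.sum_comm]
    have : ∀ w : ZMod q, ∑ v : ZMod q, χ (w - v) * ε w = 0 := by
      intro w
      rw [← Finset.sum_mul, paley_col_sum hc w, zero_mul]
    exact Finset.sum_eq_zero (fun w _ => this w)
  have inner : ∀ w w' : ZMod q,
      ∑ v : ZMod q, χ (w - v) * χ (w' - v) = (if w = w' then (q:ℤ) else 0) - 1 := by
    intro w w'
    by_cases h : w = w'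
    · rw [if_pos h, h, paley_diag_sum]
    · rw [if_neg h, paley_cross_sum hc h]; ring
  have S2 : ∑ v : ZMod q, f v * f v = (q : ℤ) * q - σ * σ := by
    have expand : ∀ v : ZMod q, f v * f v
        = ∑ w : ZMod q, ∑ w' : ZMod q, (ε w * ε w') * (χ (w - v) * χ (w' - v)) := by
      intro v
      rw [hf, Finset.sum_mul_sum]
      exact Finset.sum_congr rfl fun w _ => Finset.sum_congr rfl fun w' _ => by ring
    rw [Finset.sum_congr rfl (fun v _ => expand v)]
    rw [Finset.sum_comm]
    have swap2 : ∀ w : ZMod q,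
        ∑ v : ZMod q, ∑ w' : ZMod q, (ε w * ε w') * (χ (w - v) * χ (w' - v))
        = ∑ w' : ZMod q, (ε w * ε w') * ((if w = w' then (q:ℤ) else 0) - 1) := by
      intro w
      rw [Finset.sum_comm]
      refine Finset.sum_congr rfl fun w' _ => ?_
      rw [← inner w w', Finset.mul_sum]
    rw [Finset.sum_congr rfl (fun w _ => swap2 w)]
    have final : ∀ w : ZMod q,
        ∑ w' : ZMod q, (ε w * ε w') * ((if w = w' then (q:ℤ) else 0) - 1)
        = (q : ℤ) - ε w * σ := by
      intro w
      have : ∀ w' : ZMod q, (ε w * ε w') * ((if w = w' then (q:ℤ) else 0) - 1)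
          = (if w' = w then (ε w * ε w') * q else 0) - ε w * ε w' := by
        intro w'
        by_cases h : w = w'
        · rw [if_pos h, if_pos h.symm]; ring
        · rw [if_neg h, if_neg (Ne.symm h)]; ring
      rw [Finset.sum_congr rfl (fun w' _ => this w'), Finset.sum_sub_distrib,
        Finset.sum_ite_eq' Finset.univ w (fun w' => (ε w * ε w') * q),
        if_pos (Finset.mem_univ w), hε2 w, ← Finset.mul_sum, ← hσ, one_mul]
    rw [Finset.sum_congr rfl (fun w _ => final w), Finset.sum_sub_distrib,
      Finset.sum_const, hcard, ← Finset.sum_mul, ← hσ]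
    push_cast
    ring
  -- total sum of squares
  have total : ∑ v : ZMod q, (f v + σ)^2 = (q:ℤ)*q + ((q:ℤ) - 1) * (σ * σ) := by
    have : ∀ v : ZMod q, (f v + σ)^2 = f v * f v + 2 * σ * f v + σ * σ := by
      intro v; ring
    rw [Finset.sum_congr rfl (fun v _ => this v)]
    rw [Finset.sum_add_distrib, Finset.sum_add_distrib, ← Finset.mul_sum, S1, S2,
      Finset.sum_const, hcard]
    push_cast
    ring
  by_contra hcon
  push_neg at hcon
  have hle : ∀ v : ZMod q, (f v + σ)^2 ≤ (q:ℤ) - 1 := by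
    intro v
    have h2 : (f v + σ)^2 < (q:ℤ) := hcon v
    omega
  have hsum : ∑ v : ZMod q, (f v + σ)^2 ≤ (q:ℤ) * ((q:ℤ) - 1) := by
    calc ∑ v : ZMod q, (f v + σ)^2 ≤ ∑ _v : ZMod q, ((q:ℤ) - 1) :=
          Finset.sum_le_sum (fun v _ => hle v)
      _ = (q:ℤ) * ((q:ℤ) - 1) := by rw [Finset.sum_const, hcard]; push_cast; ring
  rw [total] at hsum
  nlinarith [mul_self_nonneg σ, (Fact.out : q.Prime).pos]

open Classical in
lemma ncard_eq_filter {α β : Type*} [Fintype α] (e : α ≃ β) (P : β → Prop) :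
    {w : β | P w}.ncard = (Finset.univ.filter (fun x : α => P (e x))).card := by
  classical
  have himg : {w : β | P w} = e '' {x : α | P (e x)} := by
    ext b
    constructor
    · intro hb; exact ⟨e.symm b, by simpa using hb, by simp⟩
    · rintro ⟨x, hx, rfl⟩; exact hx
  rw [himg, Set.ncard_image_of_injective _ e.injective, ← Set.ncard_coe_finset]
  congr 1
  ext x
  simp

lemma paley_construction (hq3 : q % 4 = 3) (K : ℕ) (hbig : 8 * K + 64 ≤ q) :
    ∃ k : ℕ, K ≤ k ∧ 0 < k ∧
      ∃ (n : ℕ) (A : Fin n → Fin n → Prop), IsTournament A ∧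
        (∀ v : Fin n, (2 * k + (1/8 : ℝ) * Real.sqrt k : ℝ) ≤ ({w | A v w} : Set (Fin n)).ncard) ∧
        ∀ V1 : Set (Fin n),
          (∃ v ∈ V1, {w | w ∈ V1 ∧ A v w}.ncard < k) ∨
          (∃ v ∈ (V1ᶜ : Set (Fin n)), {w | w ∈ V1ᶜ ∧ A v w}.ncard < k) ∨
          (∃ v : Fin n, {w | A v w ∧ (v ∈ V1 ↔ w ∉ V1)}.ncard < k) := by
  classical
  set χ := quadraticChar (ZMod q) with hχdef
  have hc : ringChar (ZMod q) ≠ 2 := by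
    rw [ZMod.ringChar_zmod_n]; omega
  have hneg : χ (-1) = -1 := by
    rw [hχdef, quadraticChar_neg_one hc, ZMod.card]
    exact ZMod.χ₄_nat_three_mod_four hq3
  have hzero : χ (0 : ZMod q) = 0 := by simp [hχdef]
  set e : ZMod q ≃ Fin q := Fintype.equivFinOfCardEq (ZMod.card q) with hedef
  set s := Nat.sqrt q with hsdef
  set k := (q - s) / 4 + 1 with hkdef
  set A : Fin q → Fin q → Prop := fun i j => χ (e.symm j - e.symm i) = 1 with hAdef
  -- the out-neighbourhood count
  set Pc := (Finset.univ.filter (fun x : ZMod q => χ x = 1)).card with hPcdef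
  have hdich : ∀ x : ZMod q, x ≠ 0 → χ x = 1 ∨ χ x = -1 := by
    intro x hx; exact quadraticChar_dichotomy hx
  have hPc : 2 * Pc + 1 = q := by
    set Nc := (Finset.univ.filter (fun x : ZMod q => χ x = -1)).card with hNcdef
    have hPN : Pc = Nc := by
      have h0 : (0 : ℤ) = ∑ x : ZMod q, χ x := (quadraticChar_sum_zero hc).symm
      have hval : ∀ x : ZMod q,
          χ x = (if χ x = 1 then (1:ℤ) else 0) - (if χ x = -1 then (1:ℤ) else 0) := by
        intro x
        by_cases hx : x = 0
        · rw [hx, hzero]; norm_num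
        · rcases hdich x hx with h | h <;> rw [h] <;> norm_num
      rw [Finset.sum_congr rfl (fun x _ => hval x), Finset.sum_sub_distrib,
        Finset.sum_boole, Finset.sum_boole] at h0
      have h1 := sub_eq_zero.mp h0.symm
      rw [hPcdef, hNcdef]
      exact Nat.cast_inj.mp h1
    have hunion : (Finset.univ.filter (fun x : ZMod q => χ x = 1)) ∪
        (Finset.univ.filter (fun x : ZMod q => χ x = -1)) = Finset.univ.erase 0 := by
      ext x
      simp only [Finset.mem_union, Finset.mem_filter, Finset.mem_univ, true_and,
        Finset.mem_erase, and_true]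
      constructor
      · rintro (h | h) hx0 <;> rw [hx0, hzero] at h <;> norm_num at h
      · intro hx; exact hdich x hx
    have hdisj : Disjoint (Finset.univ.filter (fun x : ZMod q => χ x = 1))
        (Finset.univ.filter (fun x : ZMod q => χ x = -1)) := by
      rw [Finset.disjoint_filter]
      intro x _ h1 h2
      rw [h1] at h2; norm_num at h2
    have hcards := Finset.card_union_of_disjoint hdisj
    rw [hunion] at hcards
    have : (Finset.univ.erase (0 : ZMod q)).card = q - 1 := by
      rw [Finset.card_erase_of_mem (Finset.mem_univ _), Finset.card_univ, ZMod.card]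
    rw [this] at hcards
    have hq1 : 1 ≤ q := (Fact.out : q.Prime).pos
    omega
  have houtcard : ∀ v : ZMod q,
      (Finset.univ.filter (fun w : ZMod q => χ (w - v) = 1)).card = Pc := by
    intro v
    rw [hPcdef]
    apply Finset.card_bij' (fun w _ => w - v) (fun x _ => x + v)
    · intro w hw; simpa using (Finset.mem_filter.mp hw).2
    · intro x hx
      simp only [Finset.mem_filter, Finset.mem_univ, true_and, add_sub_cancel_right]
      simpa using (Finset.mem_filter.mp hx).2
    · intro w _; ring
    · intro x _; ring
  have hq1 : 1 ≤ q := (Fact.out : q.Prime).pos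
  have hsq : s * s ≤ q := Nat.sqrt_le q
  have hs2 : 2 ≤ s := Nat.le_sqrt.mpr (by omega)
  have h2s : 2 * s ≤ q := le_trans (by nlinarith) hsq
  have hkK : K ≤ k := by omega
  have hk0 : 0 < k := by omega
  -- the tournament property
  have htour : IsTournament A := by
    constructor
    · intro v
      rw [hAdef]
      intro h
      rw [sub_self, hzero] at h
      norm_num at h
    · intro u v huv
      have hx : e.symm v - e.symm u ≠ 0 :=
        sub_ne_zero.mpr (fun h => huv (e.symm.injective h).symm)
      have hrev : e.symm u - e.symm v = -1 * (e.symm v - e.symm u) := by ring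
      rcases hdich _ hx with h | h
      · left
        refine ⟨h, ?_⟩
        rw [hAdef]
        intro h2
        rw [hrev, map_mul, hneg, h] at h2
        norm_num at h2
      · right
        constructor
        · rw [hAdef]
          show χ (e.symm u - e.symm v) = 1
          rw [hrev, map_mul, hneg, h]; norm_num
        · rw [hAdef]
          intro h2
          rw [h] at h2
          norm_num at h2
  -- out-degrees
  have hdegncard : ∀ v' : Fin q, ({w | A v' w} : Set (Fin q)).ncard = Pc := by
    intro v'
    rw [ncard_eq_filter e (fun w => A v' w)]
    rw [← houtcard (e.symm v')]
    congr 1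
    ext x
    simp only [Finset.mem_filter, Finset.mem_univ, true_and, hAdef]
    simp
  -- real estimates
  have hPcR : (Pc : ℝ) = ((q:ℝ) - 1) / 2 := by
    have h := hPc
    have : ((2 * Pc + 1 : ℕ) : ℝ) = (q : ℝ) := by exact_mod_cast h
    push_cast at this
    linarith
  have hsR2 : Real.sqrt q ≤ (s:ℝ) + 1 := by
    have h1 : (q:ℝ) ≤ ((s:ℝ) + 1)^2 := by
      have := Nat.lt_succ_sqrt' q
      have h2 : (q:ℝ) < ((s + 1 : ℕ) : ℝ)^2 := by exact_mod_cast this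
      push_cast at h2
      linarith
    calc Real.sqrt q ≤ Real.sqrt (((s:ℝ) + 1)^2) := Real.sqrt_le_sqrt h1
      _ = (s:ℝ) + 1 := Real.sqrt_sq (by positivity)
  have hkR : (k : ℝ) ≤ ((q:ℝ) - s) / 4 + 1 := by
    rw [hkdef]
    push_cast
    have h1 : ((((q - s) / 4 : ℕ)) : ℝ) ≤ ((q - s : ℕ) : ℝ) / 4 := Nat.cast_div_le
    have h2 : ((q - s : ℕ) : ℝ) = (q:ℝ) - s := by
      have : s ≤ q := Nat.sqrt_le_self q
      push_cast [this]
      ring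
    rw [h2] at h1
    linarith
  have hqR : ((Real.sqrt q))^2 = (q:ℝ) := Real.sq_sqrt (by positivity)
  have h8 : (8:ℝ) ≤ Real.sqrt q := by
    have h64 : (64:ℝ) ≤ (q:ℝ) := by
      have : (64:ℕ) ≤ q := by omega
      exact_mod_cast this
    calc (8:ℝ) = Real.sqrt (8^2) := (Real.sqrt_sq (by norm_num)).symm
      _ ≤ Real.sqrt q := Real.sqrt_le_sqrt (by norm_num; linarith)
  have hsqrtk : Real.sqrt k ≤ Real.sqrt q / 2 + 1 := by
    have hk_le : (k:ℝ) ≤ (Real.sqrt q / 2 + 1)^2 := by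
      nlinarith [hkR, hsR2, Real.sqrt_nonneg (q:ℝ), (by positivity : (0:ℝ) ≤ (s:ℝ))]
    calc Real.sqrt k ≤ Real.sqrt ((Real.sqrt q / 2 + 1)^2) := Real.sqrt_le_sqrt hk_le
      _ = Real.sqrt q / 2 + 1 := Real.sqrt_sq (by positivity)
  have hmindeg : ∀ v' : Fin q,
      (2 * k + (1/8 : ℝ) * Real.sqrt k : ℝ) ≤ (({w | A v' w} : Set (Fin q)).ncard : ℝ) := by
    intro v'
    rw [hdegncard v', hPcR]
    have hsR2' : Real.sqrt q - 1 ≤ (s:ℝ) := by linarith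
    have hsqk0 : 0 ≤ Real.sqrt k := Real.sqrt_nonneg _
    linarith
  refine ⟨k, hkK, hk0, q, A, htour, hmindeg, ?_⟩
  intro V1
  set ε : ZMod q → ℤ := fun w => if e w ∈ V1 then 1 else -1 with hεdef
  have hε : ∀ w, ε w = 1 ∨ ε w = -1 := by
    intro w; by_cases h : e w ∈ V1 <;> simp [hεdef, h]
  obtain ⟨v, hv⟩ := paley_unbalanced hc ε hε
  set outv := Finset.univ.filter (fun w : ZMod q => χ (w - v) = 1) with houtvdef
  set a := (outv.filter (fun w => e w ∈ V1)).card with hadef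
  set b := (outv.filter (fun w => ¬ (e w ∈ V1))).card with hbdef
  have hab : a + b = Pc := by
    rw [hadef, hbdef, Finset.card_filter_add_card_filter_not, houtvdef, houtcard]
  have hout_sum : ∑ w ∈ outv, ε w = (a:ℤ) - b := by
    rw [← Finset.sum_filter_add_sum_filter_not outv (fun w => e w ∈ V1)]
    have h1 : ∑ w ∈ outv.filter (fun w => e w ∈ V1), ε w = (a:ℤ) := by
      rw [Finset.sum_congr rfl (fun w hw => show ε w = 1 from by
        rw [hεdef]; exact if_pos (Finset.mem_filter.mp hw).2), Finset.sum_const, hadef]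
      simp
    have h2 : ∑ w ∈ outv.filter (fun w => ¬ (e w ∈ V1)), ε w = -(b:ℤ) := by
      rw [Finset.sum_congr rfl (fun w hw => show ε w = -1 from by
        rw [hεdef]; exact if_neg (Finset.mem_filter.mp hw).2), Finset.sum_const, hbdef]
      simp
    rw [h1, h2]; ring
  have hptwise : ∀ w : ZMod q, χ (w - v) * ε w
      = (2 * (if w ∈ outv then ε w else 0) - ε w) + (if w = v then ε v else 0) := by
    intro w
    by_cases hwv : w = v
    · have hnin : w ∉ outv := by
        rw [houtvdef, Finset.mem_filter, hwv]
        simp [sub_self, hzero]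
      rw [if_neg hnin, if_pos hwv, hwv, sub_self, hzero]; ring
    · have hne : w - v ≠ 0 := sub_ne_zero.mpr hwv
      rw [if_neg hwv]
      by_cases hwo : w ∈ outv
      · have h1 : χ (w - v) = 1 := by
          have h := hwo; rw [houtvdef, Finset.mem_filter] at h; exact h.2
        rw [if_pos hwo, h1]; ring
      · have h1 : χ (w - v) = -1 := by
          rcases hdich _ hne with h | h
          · exfalso; apply hwo; rw [houtvdef, Finset.mem_filter]
            exact ⟨Finset.mem_univ _, h⟩
          · exact h
        rw [if_neg hwo, h1]; ring
  have hY : (∑ w : ZMod q, χ (w - v) * ε w) + (∑ w : ZMod q, ε w)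
      = 2 * ((a:ℤ) - b) + ε v := by
    rw [Finset.sum_congr rfl (fun w _ => hptwise w), Finset.sum_add_distrib,
      Finset.sum_sub_distrib, ← Finset.mul_sum,
      Finset.sum_ite_mem Finset.univ outv ε, Finset.univ_inter, hout_sum,
      Finset.sum_ite_eq' Finset.univ v (fun _ => ε v), if_pos (Finset.mem_univ v)]
    ring
  rw [hY] at hv
  clear_value a b
  obtain ⟨d, hdnat'⟩ : ∃ d : ℕ, (d:ℤ) = (a:ℤ) - b ∨ (d:ℤ) = (b:ℤ) - a := by
    refine ⟨((a:ℤ) - b).natAbs, ?_⟩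
    rcases Int.natAbs_eq ((a:ℤ) - b) with h | h
    · left; omega
    · right; omega
  have hd0 : (0:ℤ) ≤ (d:ℤ) := Int.natCast_nonneg d
  have hq_le : (q:ℤ) ≤ (2*(d:ℤ) + 1)^2 := by
    rcases hε v with h1 | h1 <;> rw [h1] at hv <;> rcases hdnat' with h2 | h2 <;> nlinarith
  have hsd : s ≤ 2 * d + 1 := by
    have hq_le' : q ≤ (2*d+1)^2 := by exact_mod_cast hq_le
    calc s = Nat.sqrt q := hsdef
      _ ≤ Nat.sqrt ((2*d+1)^2) := Nat.sqrt_le_sqrt hq_le'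
      _ = 2*d+1 := by rw [sq]; exact Nat.sqrt_eq _
  have hmin : a < k ∨ b < k := by
    rcases hdnat' with h | h <;> omega
  -- translate cardinalities
  have hA_ev : ∀ x : ZMod q, A (e v) (e x) ↔ χ (x - v) = 1 := by
    intro x; rw [hAdef]; simp
  have hcard1 : ({w : Fin q | w ∈ V1 ∧ A (e v) w}).ncard = a := by
    rw [ncard_eq_filter e (fun w => w ∈ V1 ∧ A (e v) w), hadef]
    congr 1
    ext x
    simp only [Finset.mem_filter, Finset.mem_univ, true_and, houtvdef, hA_ev x]
    tauto
  have hcard2 : ({w : Fin q | w ∈ V1ᶜ ∧ A (e v) w}).ncard = b := by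
    rw [ncard_eq_filter e (fun w => w ∈ V1ᶜ ∧ A (e v) w), hbdef]
    congr 1
    ext x
    simp only [Finset.mem_filter, Finset.mem_univ, true_and, houtvdef, hA_ev x,
      Set.mem_compl_iff]
    tauto
  have hcard3p : e v ∈ V1 →
      ({w : Fin q | A (e v) w ∧ (e v ∈ V1 ↔ w ∉ V1)}).ncard = b := by
    intro hvV
    rw [ncard_eq_filter e (fun w => A (e v) w ∧ (e v ∈ V1 ↔ w ∉ V1)), hbdef]
    congr 1
    ext x
    simp only [Finset.mem_filter, Finset.mem_univ, true_and, houtvdef, hA_ev x,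
      iff_true_intro hvV, true_iff]
  have hcard3n : e v ∉ V1 →
      ({w : Fin q | A (e v) w ∧ (e v ∈ V1 ↔ w ∉ V1)}).ncard = a := by
    intro hvV
    rw [ncard_eq_filter e (fun w => A (e v) w ∧ (e v ∈ V1 ↔ w ∉ V1)), hadef]
    congr 1
    ext x
    simp only [Finset.mem_filter, Finset.mem_univ, true_and, houtvdef, hA_ev x,
      iff_false_intro hvV, false_iff, not_not]
  by_cases hvV : e v ∈ V1
  · rcases hmin with hm | hm
    · exact Or.inl ⟨e v, hvV, by rw [hcard1]; exact hm⟩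
    · exact Or.inr (Or.inr ⟨e v, by rw [hcard3p hvV]; exact hm⟩)
  · rcases hmin with hm | hm
    · exact Or.inr (Or.inr ⟨e v, by rw [hcard3n hvV]; exact hm⟩)
    · exact Or.inr (Or.inl ⟨e v, hvV, by rw [hcard2]; exact hm⟩)

end Aux

/-- There is an absolute positive constant `c2` such that for infinitely many positive
integers `k` there is a tournament with minimum out-degree at least `2k + c2·√k` in
which, for every partition `(V1, V1ᶜ)` of the vertex set, at least one of the minimum
out-degrees of the two induced subdigraphs and of the bipartite subdigraph between the
parts is smaller than `k`. -/
theorem stmt12 :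
    ∃ c2 : ℝ, 0 < c2 ∧ ∀ K : ℕ, ∃ k : ℕ, K ≤ k ∧ 0 < k ∧
      ∃ (n : ℕ) (A : Fin n → Fin n → Prop), IsTournament A ∧
        (∀ v : Fin n, (2 * k + c2 * Real.sqrt k : ℝ) ≤ ({w | A v w} : Set (Fin n)).ncard) ∧
        ∀ V1 : Set (Fin n),
          (∃ v ∈ V1, {w | w ∈ V1 ∧ A v w}.ncard < k) ∨
          (∃ v ∈ (V1ᶜ : Set (Fin n)), {w | w ∈ V1ᶜ ∧ A v w}.ncard < k) ∨
          (∃ v : Fin n, {w | A v w ∧ (v ∈ V1 ↔ w ∉ V1)}.ncard < k) := by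
  refine ⟨1/8, by norm_num, fun K => ?_⟩
  obtain ⟨q, hq64, hqp, hq3⟩ := exists_prime_3mod4 (8 * K + 64)
  haveI : Fact q.Prime := ⟨hqp⟩
  exact paley_construction hq3 K hq64
end

section
/- Let q be a prime congruent to 3 modulo 4 and let P_q be the quadratic residue (Paley) tournament on the integers modulo q. Then for every function f from the vertices of P_q to {−1,1} there is a vertex v such that |Σ_{u ∈ N+(v)} f(u)| > (1/2)·√q. -/
/-- The quadratic residue (Paley) tournament `P_q` on the integers modulo `q`:
there is an arc from `i` to `j` iff `i - j` is a non-zero quadratic residue mod `q`. -/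
def PaleyAdj (q : ℕ) : ZMod q → ZMod q → Prop :=
  fun i j => i ≠ j ∧ IsSquare (i - j)

section Aux

variable {q : ℕ} [Fact q.Prime]

/-- The key character-sum identity: `∑ w, χ(w+d)·χ(w) = -1` for `d ≠ 0`. -/
lemma paley_shift (hq2 : ringChar (ZMod q) ≠ 2) {d : ZMod q} (hd : d ≠ 0) :
    ∑ w : ZMod q, quadraticChar (ZMod q) (w + d) * quadraticChar (ZMod q) w = -1 := by
  classical
  have key : ∀ w : ZMod q, w ≠ 0 →
      quadraticChar (ZMod q) (w + d) * quadraticChar (ZMod q) w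
        = quadraticChar (ZMod q) (1 + d * w⁻¹) := by
    intro w hw
    have h1 : (w + d) * w = (1 + d * w⁻¹) * w ^ 2 := by
      field_simp
    calc quadraticChar (ZMod q) (w + d) * quadraticChar (ZMod q) w
        = quadraticChar (ZMod q) ((w + d) * w) := (map_mul _ _ _).symm
      _ = quadraticChar (ZMod q) (1 + d * w⁻¹) * quadraticChar (ZMod q) w ^ 2 := by
          rw [h1, map_mul, map_pow]
      _ = quadraticChar (ZMod q) (1 + d * w⁻¹) := by
          rw [quadraticChar_sq_one hw, mul_one]
  have h0 : ∑ w : ZMod q, quadraticChar (ZMod q) (w + d) * quadraticChar (ZMod q) w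
      = ∑ w ∈ Finset.univ.erase (0 : ZMod q),
          quadraticChar (ZMod q) (w + d) * quadraticChar (ZMod q) w := by
    rw [Finset.sum_erase _ (by simp [quadraticChar_zero])]
  rw [h0]
  have h1 : ∑ w ∈ Finset.univ.erase (0 : ZMod q),
      quadraticChar (ZMod q) (w + d) * quadraticChar (ZMod q) w
      = ∑ t ∈ Finset.univ.erase (1 : ZMod q), quadraticChar (ZMod q) t := by
    refine Finset.sum_nbij' (fun w => 1 + d * w⁻¹) (fun t => d * (t - 1)⁻¹) ?_ ?_ ?_ ?_ ?_
    · intro w hw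
      have hw0 : w ≠ 0 := Finset.ne_of_mem_erase hw
      have : d * w⁻¹ ≠ 0 := mul_ne_zero hd (inv_ne_zero hw0)
      simp only [Finset.mem_erase, Finset.mem_univ, and_true]
      intro h
      exact this (by linear_combination h)
    · intro t ht
      have ht1 : t ≠ 1 := Finset.ne_of_mem_erase ht
      have : t - 1 ≠ 0 := sub_ne_zero.mpr ht1
      simp only [Finset.mem_erase, Finset.mem_univ, and_true]
      exact mul_ne_zero hd (inv_ne_zero this)
    · intro w hw
      have hw0 : w ≠ 0 := Finset.ne_of_mem_erase hw
      show d * ((1 + d * w⁻¹) - 1)⁻¹ = w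
      rw [show (1 : ZMod q) + d * w⁻¹ - 1 = d * w⁻¹ by ring, mul_inv_rev, inv_inv,
        show d * (w * d⁻¹) = w * (d * d⁻¹) by ring, mul_inv_cancel₀ hd, mul_one]
    · intro t ht
      have ht1 : t ≠ 1 := Finset.ne_of_mem_erase ht
      show 1 + d * (d * (t - 1)⁻¹)⁻¹ = t
      rw [mul_inv_rev, inv_inv,
        show d * ((t - 1) * d⁻¹) = (t - 1) * (d * d⁻¹) by ring, mul_inv_cancel₀ hd, mul_one]
      ring
    · intro w hw
      exact key w (Finset.ne_of_mem_erase hw)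
  rw [h1]
  have h2 : ∑ t ∈ Finset.univ.erase (1 : ZMod q), quadraticChar (ZMod q) t
      + quadraticChar (ZMod q) 1 = ∑ t : ZMod q, quadraticChar (ZMod q) t :=
    Finset.sum_erase_add _ _ (Finset.mem_univ 1)
  have h3 := quadraticChar_sum_zero hq2
  have h4 : quadraticChar (ZMod q) 1 = 1 := map_one _
  omega

end Aux

/-- For a prime `q ≡ 3 (mod 4)` and any function `f` from the vertices of the Paley
tournament `P_q` to `{-1, 1}`, there is a vertex `v` with
`|∑_{u ∈ N⁺(v)} f u| > (1/2)·√q`. -/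
theorem stmt14 (q : ℕ) [NeZero q] (hq : q.Prime) (h4 : q % 4 = 3)
    (f : ZMod q → ℝ) (hf : ∀ v : ZMod q, f v = 1 ∨ f v = -1) :
    ∃ v : ZMod q,
      (1 / 2 : ℝ) * Real.sqrt q <
        |∑ u : ZMod q, Set.indicator {u | PaleyAdj q v u} f u| := by
  classical
  haveI : Fact q.Prime := ⟨hq⟩
  have hq3 : 3 ≤ q := by omega
  have hq2 : ringChar (ZMod q) ≠ 2 := by
    rw [ZMod.ringChar_zmod_n]; omega
  set χr : ZMod q → ℝ := fun x => ((quadraticChar (ZMod q) x : ℤ) : ℝ) with hχr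
  -- basic facts about χr
  have hc0 : χr 0 = 0 := by simp [hχr, quadraticChar_zero]
  have hcsq : ∀ x : ZMod q, x ≠ 0 → χr x ^ 2 = 1 := by
    intro x hx
    have := quadraticChar_sq_one (F := ZMod q) hx
    simp only [hχr]
    exact_mod_cast congrArg (fun n : ℤ => (n : ℝ)) this
  have hodd : ∀ x : ZMod q, χr (-x) = -χr x := by
    intro x
    have hneg1 : quadraticChar (ZMod q) (-1) = -1 := by
      rw [quadraticChar_neg_one hq2, ZMod.card q]
      exact ZMod.χ₄_nat_three_mod_four h4
    have : quadraticChar (ZMod q) (-x) = - quadraticChar (ZMod q) x := by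
      rw [show (-x : ZMod q) = -1 * x by ring, map_mul, hneg1]; ring
    simp only [hχr]
    exact_mod_cast congrArg (fun n : ℤ => (n : ℝ)) this
  have hcsum : ∑ x : ZMod q, χr x = 0 := by
    have := quadraticChar_sum_zero hq2
    simp only [hχr]
    exact_mod_cast congrArg (fun n : ℤ => (n : ℝ)) this
  have hcshift : ∀ d : ZMod q, d ≠ 0 → ∑ w : ZMod q, χr (w + d) * χr w = -1 := by
    intro d hd
    have := paley_shift hq2 hd
    simp only [hχr]
    exact_mod_cast congrArg (fun n : ℤ => (n : ℝ)) this
  set F : ℝ := ∑ u : ZMod q, f u with hF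
  set g : ZMod q → ℝ := fun v => ∑ u : ZMod q, χr (v - u) * f u with hg
  have hfsq : ∀ u : ZMod q, f u ^ 2 = 1 := by
    intro u; rcases hf u with h | h <;> rw [h] <;> norm_num
  -- sum over one row of character values is 0
  have hrow : ∀ u : ZMod q, ∑ v : ZMod q, χr (v - u) = 0 := by
    intro u
    exact (Fintype.sum_equiv (Equiv.subRight u) (fun v => χr (v - u)) χr
      (fun v => rfl)).trans hcsum
  -- inner double character sum
  have hBinner : ∀ u w : ZMod q,
      ∑ v : ZMod q, χr (v - u) * χr (v - w) = (q : ℝ) * (if u = w then 1 else 0) - 1 := by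
    intro u w
    by_cases huw : u = w
    · subst huw
      simp only [if_pos rfl, mul_one]
      have hpt : ∀ v : ZMod q, χr (v - u) * χr (v - u) = if v = u then 0 else 1 := by
        intro v
        by_cases hv : v = u
        · simp [hv, hc0]
        · rw [if_neg hv, ← sq, hcsq _ (sub_ne_zero.mpr hv)]
      rw [Finset.sum_congr rfl fun v _ => hpt v]
      have hpt2 : ∀ v : ZMod q, (if v = u then (0 : ℝ) else 1)
          = 1 - (if v = u then 1 else 0) := by
        intro v; by_cases h : v = u <;> simp [h]
      rw [Finset.sum_congr rfl fun v _ => hpt2 v, Finset.sum_sub_distrib,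
        Finset.sum_ite_eq' Finset.univ u (fun _ => (1 : ℝ))]
      simp [Finset.card_univ, ZMod.card]
    · rw [if_neg huw, mul_zero, zero_sub]
      have hd : w - u ≠ 0 := sub_ne_zero.mpr (Ne.symm huw)
      have hrw : ∑ v : ZMod q, χr (v - u) * χr (v - w)
          = ∑ x : ZMod q, χr (x + (w - u)) * χr x := by
        refine Fintype.sum_equiv (Equiv.subRight w) _ _ fun v => ?_
        simp only [Equiv.subRight_apply]
        congr 1
        ring_nf
      rw [hrw, hcshift _ hd]
  -- ∑ g = 0
  have hC : ∑ v : ZMod q, g v = 0 := by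
    simp only [hg]
    rw [Finset.sum_comm]
    refine Finset.sum_eq_zero fun u _ => ?_
    rw [← Finset.sum_mul, hrow u, zero_mul]
  -- ∑ g f = 0 by antisymmetry
  have hD : ∑ v : ZMod q, g v * f v = 0 := by
    have hT : ∑ v : ZMod q, g v * f v = ∑ v : ZMod q, ∑ u : ZMod q, χr (v - u) * f u * f v := by
      refine Finset.sum_congr rfl fun v _ => ?_
      rw [hg, Finset.sum_mul]
    have hT2 : ∑ v : ZMod q, ∑ u : ZMod q, χr (v - u) * f u * f v
        = - ∑ v : ZMod q, ∑ u : ZMod q, χr (v - u) * f u * f v := by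
      conv_lhs => rw [Finset.sum_comm]
      rw [← Finset.sum_neg_distrib]
      refine Finset.sum_congr rfl fun a _ => ?_
      rw [← Finset.sum_neg_distrib]
      refine Finset.sum_congr rfl fun b _ => ?_
      have : χr (b - a) = - χr (a - b) := by
        rw [show (b - a : ZMod q) = -(a - b) by ring, hodd]
      rw [this]; ring
    have : ∑ v : ZMod q, ∑ u : ZMod q, χr (v - u) * f u * f v = 0 := by linarith
    rw [hT, this]
  -- ∑ g² = q² - F²
  have hB : ∑ v : ZMod q, g v ^ 2 = (q : ℝ) ^ 2 - F ^ 2 := by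
    have step1 : ∀ v : ZMod q, g v ^ 2
        = ∑ u : ZMod q, ∑ w : ZMod q, χr (v - u) * χr (v - w) * (f u * f w) := by
      intro v
      rw [hg, sq, Finset.sum_mul_sum]
      exact Finset.sum_congr rfl fun u _ => Finset.sum_congr rfl fun w _ => by ring
    calc ∑ v : ZMod q, g v ^ 2
        = ∑ u : ZMod q, ∑ w : ZMod q, (f u * f w) * ∑ v : ZMod q, χr (v - u) * χr (v - w) := by
          rw [Finset.sum_congr rfl fun v _ => step1 v, Finset.sum_comm]
          refine Finset.sum_congr rfl fun u _ => ?_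
          rw [Finset.sum_comm]
          refine Finset.sum_congr rfl fun w _ => ?_
          rw [Finset.mul_sum]
          exact Finset.sum_congr rfl fun v _ => by ring
      _ = ∑ u : ZMod q, ∑ w : ZMod q, (f u * f w) * ((q : ℝ) * (if u = w then 1 else 0) - 1) := by
          exact Finset.sum_congr rfl fun u _ => Finset.sum_congr rfl fun w _ => by
            rw [hBinner u w]
      _ = ∑ u : ZMod q, ((q : ℝ) * f u ^ 2 - f u * F) := by
          refine Finset.sum_congr rfl fun u _ => ?_
          have : ∀ w : ZMod q, (f u * f w) * ((q : ℝ) * (if u = w then 1 else 0) - 1)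
              = (if u = w then (q : ℝ) * f u ^ 2 else 0) - f u * f w := by
            intro w
            by_cases h : u = w
            · subst h; simp; ring
            · simp [h]
          rw [Finset.sum_congr rfl fun w _ => this w, Finset.sum_sub_distrib,
            Finset.sum_ite_eq Finset.univ u (fun _ => (q : ℝ) * f u ^ 2)]
          simp [← Finset.mul_sum, hF]
      _ = (q : ℝ) ^ 2 - F ^ 2 := by
          rw [Finset.sum_sub_distrib, ← Finset.mul_sum,
            Finset.sum_congr rfl fun u _ => hfsq u, ← Finset.sum_mul]
          simp [Finset.card_univ, ZMod.card, hF, sq]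
  -- 2 · (out-neighbour sum) = g v + F - f v
  have hA : ∀ v : ZMod q,
      2 * (∑ u : ZMod q, Set.indicator {u | PaleyAdj q v u} f u) = g v + F - f v := by
    intro v
    have hpoint : ∀ u : ZMod q, 2 * Set.indicator {u | PaleyAdj q v u} f u
        = χr (v - u) * f u + f u - (if u = v then f v else 0) := by
      intro u
      by_cases huv : u = v
      · subst huv
        have hnot : u ∉ {u' | PaleyAdj q u u'} := fun h => h.1 rfl
        rw [Set.indicator_of_notMem hnot, if_pos rfl, sub_self, hc0]
        ring
      · have hvu : (v - u : ZMod q) ≠ 0 := sub_ne_zero.mpr (Ne.symm huv)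
        rw [if_neg huv]
        by_cases hs : IsSquare (v - u : ZMod q)
        · have hmem : u ∈ {u' | PaleyAdj q v u'} := ⟨Ne.symm huv, hs⟩
          rw [Set.indicator_of_mem hmem]
          have : χr (v - u) = 1 := by
            have := (quadraticChar_one_iff_isSquare hvu).mpr hs
            simp only [hχr]
            exact_mod_cast congrArg (fun n : ℤ => (n : ℝ)) this
          rw [this]; ring
        · have hnot : u ∉ {u' | PaleyAdj q v u'} := fun h => hs h.2
          rw [Set.indicator_of_notMem hnot]
          have : χr (v - u) = -1 := by
            have := quadraticChar_neg_one_iff_not_isSquare.mpr hs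
            simp only [hχr]
            exact_mod_cast congrArg (fun n : ℤ => (n : ℝ)) this
          rw [this]; ring
    rw [Finset.mul_sum, Finset.sum_congr rfl fun u _ => hpoint u,
      Finset.sum_sub_distrib, Finset.sum_add_distrib,
      Finset.sum_ite_eq' Finset.univ v (fun _ => f v)]
    simp [hg, hF]
  -- total sum of squares
  have hE : ∑ v : ZMod q, (g v + F - f v) ^ 2
      = (q : ℝ) ^ 2 + ((q : ℝ) - 3) * F ^ 2 + q := by
    have expand : ∀ v : ZMod q, (g v + F - f v) ^ 2
        = (g v ^ 2 + F ^ 2 + f v ^ 2) + (2 * F) * g v - 2 * (g v * f v) - (2 * F) * f v := by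
      intro v; ring
    rw [Finset.sum_congr rfl fun v _ => expand v]
    rw [Finset.sum_sub_distrib, Finset.sum_sub_distrib, Finset.sum_add_distrib,
      Finset.sum_add_distrib, Finset.sum_add_distrib, ← Finset.mul_sum, ← Finset.mul_sum,
      ← Finset.mul_sum, hB, hC, hD,
      Finset.sum_congr rfl fun v _ => hfsq v]
    simp only [Finset.sum_const, Finset.card_univ, ZMod.card, nsmul_eq_mul, mul_one, mul_zero]
    rw [← hF]
    ring
  -- find the vertex
  have hqpos : (0 : ℝ) < q := by positivity
  have hsum_gt : ∑ v : ZMod q, (q : ℝ) < ∑ v : ZMod q, (g v + F - f v) ^ 2 := by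
    rw [hE, Finset.sum_const, Finset.card_univ, ZMod.card, nsmul_eq_mul]
    have h1 : (0 : ℝ) ≤ ((q : ℝ) - 3) * F ^ 2 := by
      apply mul_nonneg _ (sq_nonneg _)
      have : (3 : ℝ) ≤ (q : ℝ) := by exact_mod_cast hq3
      linarith
    nlinarith
  obtain ⟨v, _, hv⟩ := Finset.exists_lt_of_sum_lt hsum_gt
  refine ⟨v, ?_⟩
  have hAv := hA v
  set S : ℝ := ∑ u : ZMod q, Set.indicator {u | PaleyAdj q v u} f u with hS
  have hv2 : (q : ℝ) < (2 * S) ^ 2 := by rw [hAv]; exact hv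
  have h5 : Real.sqrt q < |2 * S| := by
    calc Real.sqrt q < Real.sqrt ((2 * S) ^ 2) := Real.sqrt_lt_sqrt (le_of_lt hqpos) hv2
      _ = |2 * S| := Real.sqrt_sq_eq_abs _
  rw [abs_mul, abs_two] at h5
  linarith [abs_nonneg S]
end

section
/- Let H = (X,E) be a hypergraph in which every hyperedge is non-empty, every vertex lies in at least one hyperedge, and E is non-empty. Let D_H be the symmetric digraph whose vertex set is X ∪ E ∪ {z} (z a new vertex), with a directed 2-cycle between x ∈ X and e ∈ E whenever x ∈ e, and a directed 2-cycle between z and every x ∈ X. Then H has a proper 2-colouring (a 2-colouring of X with no monochromatic hyperedge) if and only if D_H has a 2-out-colouring. -/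
/-- A 2-out-colouring: a colouring of the vertices with 2 colours such that
no out-neighbourhood is monochromatic. -/
def HasOutColouring {V : Type*} (A : V → V → Prop) (r : ℕ) : Prop :=
  ∃ γ : V → Fin r, ∀ v : V, ∃ u w : V, A v u ∧ A v w ∧ γ u ≠ γ w

/-- The symmetric digraph `D_H` associated with the hypergraph with vertex set `X` and
hyperedges `edges i` (`i : ι`): its vertices are `X ⊕ ι ⊕ Unit` (vertices, hyperedges
and the extra vertex `z`), with a directed 2-cycle between `x : X` and `i : ι` whenever
`x ∈ edges i`, and a directed 2-cycle between `z` and every `x : X`. -/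
def DHAdj {X ι : Type*} (edges : ι → Set X) :
    (X ⊕ ι ⊕ Unit) → (X ⊕ ι ⊕ Unit) → Prop
  | Sum.inl x, Sum.inr (Sum.inl i) => x ∈ edges i
  | Sum.inr (Sum.inl i), Sum.inl x => x ∈ edges i
  | Sum.inl _, Sum.inr (Sum.inr _) => True
  | Sum.inr (Sum.inr _), Sum.inl _ => True
  | _, _ => False

/-- Let `H` be a hypergraph in which every hyperedge is non-empty, every vertex lies in
at least one hyperedge and there is at least one hyperedge. Then `H` has a proper
2-colouring (no monochromatic hyperedge) if and only if the symmetric digraph `D_H`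
has a 2-out-colouring. -/
theorem stmt19 {X ι : Type*} [Fintype X] [Fintype ι] (edges : ι → Set X)
    (hne : ∀ i : ι, (edges i).Nonempty)
    (hcov : ∀ x : X, ∃ i : ι, x ∈ edges i)
    (hE : Nonempty ι) :
    (∃ c : X → Fin 2, ∀ i : ι, ∃ x ∈ edges i, ∃ y ∈ edges i, c x ≠ c y) ↔
      HasOutColouring (DHAdj edges) 2 := by
  constructor
  · rintro ⟨c, hc⟩
    refine ⟨fun v => match v with
      | Sum.inl x => c x
      | Sum.inr (Sum.inl _) => 0
      | Sum.inr (Sum.inr _) => 1, ?_⟩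
    rintro (x | i | z)
    · obtain ⟨i, hi⟩ := hcov x
      exact ⟨Sum.inr (Sum.inl i), Sum.inr (Sum.inr ()), hi, trivial, by show (0 : Fin 2) ≠ 1; decide⟩
    · obtain ⟨x, hx, y, hy, hxy⟩ := hc i
      exact ⟨Sum.inl x, Sum.inl y, hx, hy, hxy⟩
    · obtain ⟨i⟩ := hE
      obtain ⟨x, hx, y, hy, hxy⟩ := hc i
      exact ⟨Sum.inl x, Sum.inl y, trivial, trivial, hxy⟩
  · rintro ⟨γ, hγ⟩
    refine ⟨fun x => γ (Sum.inl x), fun i => ?_⟩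
    obtain ⟨u, w, hu, hw, huw⟩ := hγ (Sum.inr (Sum.inl i))
    match u, hu with
    | Sum.inl x, hu =>
      match w, hw with
      | Sum.inl y, hw => exact ⟨x, hu, y, hw, huw⟩
      | Sum.inr (Sum.inl _), hw => exact hw.elim
      | Sum.inr (Sum.inr _), hw => exact hw.elim
    | Sum.inr (Sum.inl _), hu => exact hu.elim
    | Sum.inr (Sum.inr _), hu => exact hu.elim
end
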